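/- arXiv:2403.12549 — 4 statements merged into one kernel-verified Lean document; each statement's English description precedes it below -/
import Mathlib

section
/- For every positive integer k, tw(BK(2k+1,k)) ≤ tw(J(2k+1,k)), i.e., the treewidth of the bipartite Kneser graph BK(2k+1,k) is at most the treewidth of the Johnson graph J(2k+1,k). -/
open SimpleGraph

section Helly

variable {ι : Type*} {T : SimpleGraph ι}

lemma reachable_induce_of_walk {S : Set ι} :
    ∀ {i j : ι} (hi : i ∈ S) (hj : j ∈ S) (w : T.Walk i j),
    (∀ x ∈ w.support, x ∈ S) →
      (T.induce S).Reachable ⟨i, hi⟩ ⟨j, hj⟩ := by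
  intro i j hi hj w
  induction w with
  | nil => intro _; rfl
  | @cons a b c h p ih =>
      intro hw
      have hb : b ∈ S := hw b (by simp)
      have hadj : (T.induce S).Adj ⟨a, hi⟩ ⟨b, hb⟩ := by
        simp only [comap_adj, Function.Embedding.coe_subtype]
        exact h
      exact (hadj.reachable).trans (ih hb hj (fun x hx => hw x (by simp [hx])))

/-- The inclusion homomorphism from an induced subgraph. -/
def inclHom (T : SimpleGraph ι) (S : Set ι) : T.induce S →g T where
  toFun := Subtype.val
  map_rel' := fun h => h

lemma exists_walk_of_induce_reachable {S : Set ι} {i j : ι} (hi : i ∈ S) (hj : j ∈ S)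
    (h : (T.induce S).Reachable ⟨i, hi⟩ ⟨j, hj⟩) :
    ∃ w : T.Walk i j, ∀ x ∈ w.support, x ∈ S := by
  obtain ⟨w⟩ := h
  refine ⟨w.map (inclHom T S), ?_⟩
  intro x hx
  replace hx : x ∈ w.support.map (inclHom T S) := by rw [← Walk.support_map]; exact hx
  obtain ⟨y, _, rfl⟩ := List.mem_map.mp hx
  exact y.2

lemma path_support_mem (hA : T.IsAcyclic) {S : Set ι} (hS : (T.induce S).Connected)
    {i j : ι} (hi : i ∈ S) (hj : j ∈ S) {p : T.Walk i j} (hp : p.IsPath) :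
    ∀ x ∈ p.support, x ∈ S := by
  classical
  obtain ⟨w, hw⟩ := exists_walk_of_induce_reachable hi hj (hS.preconnected ⟨i, hi⟩ ⟨j, hj⟩)
  have hqe : (⟨p, hp⟩ : T.Path i j) = w.toPath := hA.path_unique _ _
  intro x hx
  have hx' : x ∈ (w.toPath : T.Walk i j).support := by
    have := congrArg (fun q : T.Path i j => (q : T.Walk i j).support) hqe
    simpa [← this] using hx
  exact hw x (w.support_toPath_subset hx')

lemma crossing {Q R : Set ι} :
    ∀ {x y : ι} (p : T.Walk x y),
      (∀ m ∈ p.support, (m ∈ Q ∨ m ∈ R) ∧ ¬(m ∈ Q ∧ m ∈ R)) → x ∈ Q → y ∈ R →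
      ∃ u v, T.Adj u v ∧ u ∈ p.support ∧ v ∈ p.support ∧ u ∈ Q ∧ v ∈ R := by
  intro x y p
  induction p with
  | nil =>
      intro hall hx hy
      exact absurd ⟨hx, hy⟩ (hall _ (by simp)).2
  | @cons a b c h p ih =>
      intro hall hx hy
      by_cases hbR : b ∈ R
      · exact ⟨a, b, h, by simp, by simp, hx, hbR⟩
      · have hb : b ∈ Q := by
          rcases (hall b (by simp)).1 with hb | hb
          · exact hb
          · exact absurd hb hbR
        obtain ⟨u, v, huv, hu, hv, huQ, hvR⟩ :=
          ih (fun m hm => hall m (by simp [hm])) hb hy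
        exact ⟨u, v, huv, by simp [hu], by simp [hv], huQ, hvR⟩

lemma helly3 (hT : T.IsTree) {X Y Z : Set ι}
    (hX : (T.induce X).Connected) (hY : (T.induce Y).Connected) (hZ : (T.induce Z).Connected)
    (hXY : (X ∩ Y).Nonempty) (hXZ : (X ∩ Z).Nonempty) (hYZ : (Y ∩ Z).Nonempty) :
    (X ∩ Y ∩ Z).Nonempty := by
  classical
  obtain ⟨x, hxX, hxY⟩ := hXY
  obtain ⟨y, hyX, hyZ⟩ := hXZ
  obtain ⟨z, hzY, hzZ⟩ := hYZ
  have hconn := hT.isConnected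
  have hacy := hT.IsAcyclic
  obtain ⟨w0⟩ := hconn.preconnected x y
  set p : T.Path x y := w0.toPath with hp
  obtain ⟨w1⟩ := hconn.preconnected z x
  set q : T.Path z x := w1.toPath with hq
  obtain ⟨w2⟩ := hconn.preconnected z y
  set r : T.Path z y := w2.toPath with hr
  have hpX : ∀ m ∈ (p : T.Walk x y).support, m ∈ X :=
    path_support_mem hacy hX hxX hyX p.2
  have hqY : ∀ m ∈ (q : T.Walk z x).support, m ∈ Y :=
    path_support_mem hacy hY hzY hxY q.2
  have hrZ : ∀ m ∈ (r : T.Walk z y).support, m ∈ Z :=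
    path_support_mem hacy hZ hzZ hyZ r.2
  -- p's support is covered by supports of q and r
  have hcover : ∀ m ∈ (p : T.Walk x y).support,
      m ∈ (q : T.Walk z x).support ∨ m ∈ (r : T.Walk z y).support := by
    have hpw : p = ((q : T.Walk z x).reverse.append (r : T.Walk z y)).toPath :=
      hacy.path_unique _ _
    intro m hm
    have hm' : m ∈ ((q : T.Walk z x).reverse.append (r : T.Walk z y)).support := by
      apply Walk.support_toPath_subset
      rw [← hpw]; exact hm
    rw [Walk.mem_support_append_iff] at hm'
    rcases hm' with hm' | hm'
    · left; rwa [Walk.support_reverse, List.mem_reverse] at hm'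
    · right; exact hm'
  by_cases hex : ∃ m, m ∈ (p : T.Walk x y).support ∧
      m ∈ (q : T.Walk z x).support ∧ m ∈ (r : T.Walk z y).support
  · obtain ⟨m, hm1, hm2, hm3⟩ := hex
    exact ⟨m, ⟨hpX m hm1, hqY m hm2⟩, hrZ m hm3⟩
  · exfalso
    push_neg at hex
    obtain ⟨u, v, huv, hup, hvp, huQ, hvR⟩ :=
      crossing (Q := {m | m ∈ (q : T.Walk z x).support})
        (R := {m | m ∈ (r : T.Walk z y).support}) (p : T.Walk x y)
        (fun m hm => ⟨hcover m hm, fun ⟨h1, h2⟩ => hex m hm h1 h2⟩)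
        (Walk.end_mem_support _) (Walk.end_mem_support _)
    have hunr : u ∉ (r : T.Walk z y).support := fun hc => hex u hup huQ hc
    have hvnq : v ∉ (q : T.Walk z x).support := fun hc => hex v hvp hc hvR
    -- build two paths from z to v
    have hs1 : (((q : T.Walk z x).takeUntil u huQ).concat huv).IsPath := by
      rw [Walk.isPath_def, Walk.support_concat]
      rw [List.nodup_append]
      refine ⟨(q.2.takeUntil huQ).support_nodup, List.nodup_singleton v, ?_⟩
      intro m hm m' hm' hmm'
      rw [List.mem_singleton] at hm'
      subst hm' hmm'
      exact hvnq (Walk.support_takeUntil_subset _ huQ hm)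
    have hs2 : ((r : T.Walk z y).takeUntil v hvR).IsPath := r.2.takeUntil hvR
    have heq : (⟨_, hs1⟩ : T.Path z v) = ⟨_, hs2⟩ := hacy.path_unique _ _
    have hu1 : u ∈ (((q : T.Walk z x).takeUntil u huQ).concat huv).support := by
      rw [Walk.support_concat]
      rw [List.mem_append]
      exact Or.inl (Walk.end_mem_support _)
    have hu2 : u ∈ ((r : T.Walk z y).takeUntil v hvR).support := by
      have := congrArg (fun q : T.Path z v => (q : T.Walk z v).support) heq
      simp only [← this]
      exact hu1
    exact hunr (Walk.support_takeUntil_subset _ hvR hu2)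

end Helly

section Helly2

variable {ι : Type*} {T : SimpleGraph ι}

lemma induce_inter_connected (hT : T.IsTree) {X Y : Set ι}
    (hX : (T.induce X).Connected) (hY : (T.induce Y).Connected)
    (hne : (X ∩ Y).Nonempty) : (T.induce (X ∩ Y)).Connected := by
  classical
  have hpre : (T.induce (X ∩ Y)).Preconnected := by
    intro x y
    obtain ⟨a, ha⟩ := x
    obtain ⟨b, hb⟩ := y
    obtain ⟨haX, haY⟩ := ha
    obtain ⟨hbX, hbY⟩ := hb
    obtain ⟨w0⟩ := hT.isConnected.preconnected a b
    have hpX := path_support_mem hT.IsAcyclic hX haX hbX w0.toPath.2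
    have hpY := path_support_mem hT.IsAcyclic hY haY hbY w0.toPath.2
    exact reachable_induce_of_walk (Set.mem_inter haX haY) (Set.mem_inter hbX hbY) (w0.toPath : T.Walk a b)
      (fun x hx => Set.mem_inter (hpX x hx) (hpY x hx))
  rw [connected_iff]
  exact ⟨hpre, hne.to_subtype⟩

lemma helly_family (hT : T.IsTree) {A : Type*} [DecidableEq A] (C : Finset A) (S : A → Set ι)
    (hconn : ∀ a ∈ C, (T.induce (S a)).Connected)
    (hpair : ∀ a ∈ C, ∀ b ∈ C, (S a ∩ S b).Nonempty) (hne : C.Nonempty) :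
    (⋂ a ∈ C, S a).Nonempty ∧ (T.induce (⋂ a ∈ C, S a)).Connected ∧
      ∀ Y : Set ι, (T.induce Y).Connected → (∀ a ∈ C, (Y ∩ S a).Nonempty) →
        (Y ∩ ⋂ a ∈ C, S a).Nonempty := by
  induction C using Finset.cons_induction with
  | empty => exact absurd hne (by simp)
  | @cons a C' ha ih =>
    by_cases hC' : C'.Nonempty
    · obtain ⟨hne', hconn', hY'⟩ :=
        ih (fun b hb => hconn b (by simp [hb])) (fun b hb c hc => hpair b (by simp [hb]) c (by simp [hc])) hC'
      have hIeq : (⋂ b ∈ Finset.cons a C' ha, S b) = S a ∩ ⋂ b ∈ C', S b := by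
        simp [Finset.cons_eq_insert]
      have hSa := hconn a (Finset.mem_cons_self a C')
      have hIne : (S a ∩ ⋂ b ∈ C', S b).Nonempty :=
        hY' (S a) hSa (fun b hb => hpair a (Finset.mem_cons_self a C') b (by simp [hb]))
      refine ⟨hIeq ▸ hIne, hIeq ▸ induce_inter_connected hT hSa hconn' hIne, ?_⟩
      intro Y hYc hYmeets
      rw [hIeq, ← Set.inter_assoc]
      exact helly3 hT hYc hSa hconn' (hYmeets a (Finset.mem_cons_self a C'))
        (hY' Y hYc (fun b hb => hYmeets b (by simp [hb]))) hIne
    · rw [Finset.not_nonempty_iff_eq_empty] at hC'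
      subst hC'
      have hIeq : (⋂ b ∈ Finset.cons a (∅ : Finset A) ha, S b) = S a := by simp
      rw [hIeq]
      refine ⟨?_, hconn a (Finset.mem_cons_self a ∅), ?_⟩
      · obtain ⟨x, hx, _⟩ := hpair a (Finset.mem_cons_self a ∅) a (Finset.mem_cons_self a ∅)
        exact ⟨x, hx⟩
      · intro Y _ hYm
        exact hYm a (Finset.mem_cons_self a ∅)

end Helly2

section LeafTree

variable {ι : Type*} {β : Type*}

/-- Extend a graph by hanging a new leaf `b` onto the node `f b`, for each `b : β`. -/
def leafExtend (T : SimpleGraph ι) (f : β → ι) : SimpleGraph (ι ⊕ β) where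
  Adj x y :=
    match x, y with
    | Sum.inl i, Sum.inl j => T.Adj i j
    | Sum.inl i, Sum.inr b => i = f b
    | Sum.inr b, Sum.inl i => i = f b
    | Sum.inr _, Sum.inr _ => False
  symm := by
    constructor
    rintro (i | b) (j | c) h
    · exact T.adj_symm h
    · exact h
    · exact h
    · exact h.elim
  loopless := by
    constructor
    rintro (i | b) h
    · exact T.irrefl h
    · exact h

variable {T : SimpleGraph ι} {f : β → ι}

@[simp] lemma leafExtend_adj_inl_inl {i j : ι} :
    (leafExtend T f).Adj (Sum.inl i) (Sum.inl j) ↔ T.Adj i j := Iff.rfl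

@[simp] lemma leafExtend_adj_inl_inr {i : ι} {b : β} :
    (leafExtend T f).Adj (Sum.inl i) (Sum.inr b) ↔ i = f b := Iff.rfl

@[simp] lemma leafExtend_adj_inr_inl {i : ι} {b : β} :
    (leafExtend T f).Adj (Sum.inr b) (Sum.inl i) ↔ i = f b := Iff.rfl

@[simp] lemma leafExtend_adj_inr_inr {b c : β} :
    ¬ (leafExtend T f).Adj (Sum.inr b) (Sum.inr c) := fun h => h

/-- The inclusion of the original graph into a leaf extension. -/
def leafExtendHom (T : SimpleGraph ι) (f : β → ι) : T →g leafExtend T f where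
  toFun := Sum.inl
  map_rel' := fun h => h

lemma leafExtend_connected (hT : T.Connected) : (leafExtend T f).Connected := by
  have hreach : ∀ x : ι ⊕ β, ∃ i : ι, (leafExtend T f).Reachable x (Sum.inl i) := by
    rintro (i | b)
    · exact ⟨i, Reachable.refl _⟩
    · exact ⟨f b, Adj.reachable (by simp)⟩
  rw [connected_iff]
  constructor
  · intro x y
    obtain ⟨i, hi⟩ := hreach x
    obtain ⟨j, hj⟩ := hreach y
    exact hi.trans (((hT.preconnected i j).map (leafExtendHom T f)).trans hj.symm)
  · obtain ⟨i⟩ := hT.nonempty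
    exact ⟨Sum.inl i⟩

lemma leafExtend_pull :
    ∀ {a b : ι ⊕ β} (w : (leafExtend T f).Walk a b) {x y : ι}, a = Sum.inl x → b = Sum.inl y →
      (∀ z ∈ w.support, ∃ i, z = Sum.inl i) →
      ∃ w' : T.Walk x y, w'.support.map Sum.inl = w.support ∧
        w'.edges.map (Sym2.map Sum.inl) = w.edges := by
  intro a b w
  induction w with
  | nil =>
      rintro x y rfl hb _
      obtain rfl : x = y := Sum.inl.inj hb
      exact ⟨Walk.nil, by simp, by simp⟩
  | @cons a c b h p ih =>
      rintro x y rfl rfl hall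
      obtain ⟨i, rfl⟩ := hall c (by simp)
      obtain ⟨w', hs, he⟩ := ih rfl rfl (fun z hz => hall z (by simp [hz]))
      exact ⟨Walk.cons (h : T.Adj x i) w', by exact congrArg (List.cons _) hs, by exact congrArg (List.cons _) he⟩

lemma leafExtend_inr_not_mem_cycle {v : ι ⊕ β} {c : (leafExtend T f).Walk v v}
    (hc : c.IsCycle) (b : β) : Sum.inr b ∉ c.support := by
  classical
  intro hb
  have hc' : (c.rotate _ hb).IsCycle := hc.rotate hb
  have h3 : 3 ≤ (c.rotate _ hb).length := hc'.three_le_length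
  set c' := c.rotate _ hb with hc'def
  clear_value c'
  cases c' with
  | nil => simp at h3
  | @cons _ w1 _ h p =>
      cases w1 with
      | inr b' => exact leafExtend_adj_inr_inr h
      | inl i =>
          have hi : i = f b := by simpa using h
          subst hi
          rw [Walk.isCycle_def] at hc'
          obtain ⟨htrail, -, -⟩ := hc'
          have hpe : p.edges ≠ [] := by
            intro hnil
            have hl := Walk.length_edges p
            rw [hnil] at hl
            simp only [List.length_nil] at hl
            simp only [Walk.length_cons] at h3
            omega
          set e : Sym2 (ι ⊕ β) := s(Sum.inr b, Sum.inl (f b)) with he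
          have hlast : e ∈ p.edges := by
            have hrne : (Walk.cons h p).reverse ≠ Walk.nil := by
              intro hn
              have hlen := congrArg Walk.length hn
              simp only [Walk.length_reverse, Walk.length_cons, Walk.length_nil] at hlen
              omega
            cases hrevw : (Walk.cons h p).reverse with
            | nil => exact absurd hrevw hrne
            | @cons _ w2 _ h2 p2 =>
                cases w2 with
                | inr b' => exact absurd h2 leafExtend_adj_inr_inr
                | inl i2 =>
                    have hi2 : i2 = f b := by simpa using h2
                    subst hi2
                    have hedges : (Walk.cons h p).edges.reverse = e :: p2.edges := by
                      rw [← Walk.edges_reverse, hrevw, Walk.edges_cons]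
                    rw [Walk.edges_cons, List.reverse_cons] at hedges
                    have hprne : p.edges.reverse ≠ [] := by
                      simpa using hpe
                    obtain ⟨x, t, hx⟩ := List.exists_cons_of_ne_nil hprne
                    rw [hx] at hedges
                    simp only [List.cons_append, List.cons.injEq] at hedges
                    have hxe : x = e := hedges.1
                    have : e ∈ p.edges.reverse := by rw [hx, hxe]; exact List.mem_cons_self
                    exact List.mem_reverse.mp this
          have hnodup := htrail.edges_nodup
          rw [Walk.edges_cons] at hnodup
          exact (List.nodup_cons.mp hnodup).1 hlast

lemma leafExtend_isAcyclic (hA : T.IsAcyclic) : (leafExtend T f).IsAcyclic := by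
  intro v c hc
  have hinl : ∀ z ∈ c.support, ∃ i, z = Sum.inl i := by
    intro z hz
    cases z with
    | inl i => exact ⟨i, rfl⟩
    | inr b => exact absurd hz (leafExtend_inr_not_mem_cycle hc b)
  obtain ⟨i0, hv⟩ := hinl v c.start_mem_support
  subst hv
  obtain ⟨w', hs, hedg⟩ := leafExtend_pull c rfl rfl hinl
  apply hA w'
  have hlen : w'.length = c.length := by
    have hl := congrArg List.length hedg
    simpa [Walk.length_edges] using hl
  rw [Walk.isCycle_def]
  refine ⟨?_, ?_, ?_⟩
  · rw [Walk.isTrail_def]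
    have hnd := hc.edges_nodup
    rw [← hedg] at hnd
    exact hnd.of_map _
  · intro hnil
    have h3 := hc.three_le_length
    rw [hnil] at hlen
    simp only [Walk.length_nil] at hlen
    omega
  · have hnd := hc.support_nodup
    have htl : w'.support.tail.map Sum.inl = c.support.tail := by
      rw [← hs, List.map_tail]
    rw [← htl] at hnd
    exact hnd.of_map _

lemma leafExtend_isTree (hT : T.IsTree) : (leafExtend T f).IsTree :=
  ⟨leafExtend_connected hT.isConnected, leafExtend_isAcyclic hT.IsAcyclic⟩

end LeafTree



/-- A tree decomposition of a graph `G` over a tree `T`: bags cover all vertices and all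
edges, and for each vertex the set of nodes whose bags contain it induces a connected
(hence subtree) part of `T`. -/
structure TreeDecomp {V : Type*} {ι : Type} (G : SimpleGraph V) (T : SimpleGraph ι) where
  bag : ι → Finset V
  cover : ∀ v : V, ∃ i, v ∈ bag i
  edgeCover : ∀ u v : V, G.Adj u v → ∃ i, u ∈ bag i ∧ v ∈ bag i
  subtree : ∀ v : V, (T.induce {i : ι | v ∈ bag i}).Connected

/-- The treewidth of a finite graph: the minimum over all tree decompositions of
(maximum bag size − 1). -/
noncomputable def treewidth {V : Type*} [Fintype V] (G : SimpleGraph V) : ℕ :=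
  sInf { w : ℕ | ∃ (ι : Type) (_ : Fintype ι) (T : SimpleGraph ι),
    T.IsTree ∧ ∃ D : TreeDecomp G T,
      (Finset.univ.sup fun i => (D.bag i).card) - 1 = w }

/-- A path decomposition of `G` with bags indexed by `Fin m` along a path: for each
vertex, the set of indices of bags containing it is an interval. -/
structure PathDecomp {V : Type*} (G : SimpleGraph V) (m : ℕ) where
  bag : Fin m → Finset V
  cover : ∀ v : V, ∃ i, v ∈ bag i
  edgeCover : ∀ u v : V, G.Adj u v → ∃ i, u ∈ bag i ∧ v ∈ bag i
  interval : ∀ (v : V) (i j k : Fin m), i ≤ j → j ≤ k → v ∈ bag i → v ∈ bag k → v ∈ bag j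

/-- The pathwidth of a finite graph: the minimum over all path decompositions of
(maximum bag size − 1). -/
noncomputable def pathwidth {V : Type*} [Fintype V] (G : SimpleGraph V) : ℕ :=
  sInf { w : ℕ | ∃ (m : ℕ) (D : PathDecomp G m),
    (Finset.univ.sup fun i => (D.bag i).card) - 1 = w }

/-- The bandwidth of a finite graph: the minimum over all bijective numberings of the
vertices of the maximum stretch `|φ u − φ v|` over edges `uv`. -/
noncomputable def bandwidth {V : Type*} [Fintype V] (G : SimpleGraph V) : ℕ :=
  sInf { b : ℕ | ∃ φ : V ≃ Fin (Fintype.card V),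
    ∀ u v : V, G.Adj u v → ((φ u : ℤ) - (φ v : ℤ)).natAbs ≤ b }

/-- The bipartite Kneser graph `BK(n,k)`: vertices are the `k`-subsets and the
`(n−k)`-subsets of `{1,…,n}`; a `k`-subset is adjacent to an `(n−k)`-subset containing
it (equivalently, for `2k < n`, two vertices are adjacent iff one is strictly contained
in the other). -/
def bipartiteKneser (n k : ℕ) :
    SimpleGraph {A : Finset (Fin n) // A.card = k ∨ A.card = n - k} where
  Adj A B := A.1 ⊂ B.1 ∨ B.1 ⊂ A.1
  symm := ⟨fun A B h => h.symm⟩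
  loopless := ⟨fun A h => by
    rcases h with h | h <;> exact ssubset_irrefl _ h⟩

/-- The Johnson graph `J(n,k)`: vertices are the `k`-subsets of `{1,…,n}`, two distinct
subsets adjacent iff their intersection has exactly `k−1` elements. -/
def johnson (n k : ℕ) : SimpleGraph {A : Finset (Fin n) // A.card = k} where
  Adj A B := A ≠ B ∧ (A.1 ∩ B.1).card = k - 1
  symm := ⟨by
    rintro A B ⟨h1, h2⟩
    exact ⟨h1.symm, by rwa [Finset.inter_comm]⟩⟩
  loopless := ⟨by rintro A ⟨h, -⟩; exact h rfl⟩

lemma clique_in_bag {V : Type*} {ι : Type} {G : SimpleGraph V} {T : SimpleGraph ι}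
    (hT : T.IsTree) (D : TreeDecomp G T) (C : Finset V)
    (hC : ∀ u ∈ C, ∀ v ∈ C, u ≠ v → G.Adj u v) :
    ∃ i, ∀ v ∈ C, v ∈ D.bag i := by
  classical
  rcases C.eq_empty_or_nonempty with rfl | hne
  · obtain ⟨i⟩ := hT.isConnected.nonempty
    exact ⟨i, by simp⟩
  · have hpair : ∀ u ∈ C, ∀ v ∈ C,
        ({i | u ∈ D.bag i} ∩ {i | v ∈ D.bag i} : Set ι).Nonempty := by
      intro u hu v hv
      by_cases huv : u = v
      · subst huv
        obtain ⟨i, hi⟩ := D.cover u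
        exact ⟨i, Set.mem_inter hi hi⟩
      · obtain ⟨i, h1, h2⟩ := D.edgeCover u v (hC u hu v hv huv)
        exact ⟨i, Set.mem_inter h1 h2⟩
    obtain ⟨⟨i, hi⟩, -, -⟩ := helly_family hT C (fun v => {i | v ∈ D.bag i})
      (fun v _ => D.subtree v) hpair hne
    exact ⟨i, fun v hv => Set.mem_iInter₂.mp hi v hv⟩

namespace BKJaux

variable (k : ℕ)

/-- vertices of the Johnson graph -/
abbrev VJ := {A : Finset (Fin (2*k+1)) // A.card = k}
/-- the (k+1)-sets -/
abbrev VB := {B : Finset (Fin (2*k+1)) // B.card = k+1}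
/-- vertices of the bipartite Kneser graph -/
abbrev VBK := {A : Finset (Fin (2*k+1)) // A.card = k ∨ A.card = 2*k+1 - k}

def em (A : VJ k) : VBK k := ⟨A.1, Or.inl A.2⟩

def vb (B : VB k) : VBK k :=
  ⟨B.1, Or.inr (by rw [show 2*k+1-k = k+1 by omega]; exact B.2)⟩

lemma em_injective : Function.Injective (em k) := by
  intro A A' h
  apply Subtype.ext
  have h' := congrArg Subtype.val h
  simp only [em] at h'
  exact h'

/-- the set of `k`-subsets of a `(k+1)`-set, as a clique in the Johnson graph -/
def CB (B : VB k) : Finset (VJ k) := Finset.univ.filter (fun A => A.1 ⊆ B.1)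

lemma mem_CB {B : VB k} {A : VJ k} : A ∈ CB k B ↔ A.1 ⊆ B.1 := by
  simp [CB]

lemma CB_card (B : VB k) : (CB k B).card ≤ k + 1 := by
  classical
  have h1 : (CB k B).card = ((CB k B).image Subtype.val).card :=
    (Finset.card_image_of_injective _ Subtype.val_injective).symm
  have h2 : (CB k B).image Subtype.val ⊆ B.1.powersetCard k := by
    intro s hs
    obtain ⟨A, hA, rfl⟩ := Finset.mem_image.mp hs
    exact Finset.mem_powersetCard.mpr ⟨(mem_CB k).mp hA, A.2⟩
  calc (CB k B).card = ((CB k B).image Subtype.val).card := h1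
    _ ≤ (B.1.powersetCard k).card := Finset.card_le_card h2
    _ = k + 1 := by
        rw [Finset.card_powersetCard, B.2, Nat.choose_succ_self_right]

lemma johnson_adj_of_subset (hk : 1 ≤ k) {B : VB k} {A A' : VJ k}
    (hA : A ∈ CB k B) (hA' : A' ∈ CB k B) (hne : A ≠ A') :
    (johnson (2*k+1) k).Adj A A' := by
  classical
  refine ⟨hne, ?_⟩
  have hsub : A.1 ∪ A'.1 ⊆ B.1 :=
    Finset.union_subset ((mem_CB k).mp hA) ((mem_CB k).mp hA')
  have hle : (A.1 ∪ A'.1).card ≤ k + 1 := by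
    have := Finset.card_le_card hsub
    rwa [B.2] at this
  have hgt : ¬ (A.1 ∪ A'.1).card ≤ k := by
    intro hle'
    have h1 : A.1 = A.1 ∪ A'.1 :=
      Finset.eq_of_subset_of_card_le Finset.subset_union_left (by rw [A.2]; exact hle')
    have h2 : A'.1 = A.1 ∪ A'.1 :=
      Finset.eq_of_subset_of_card_le Finset.subset_union_right (by rw [A'.2]; exact hle')
    exact hne (Subtype.ext (h1.trans h2.symm))
  have hcard : (A.1 ∪ A'.1).card = k + 1 := by omega
  have hia := Finset.card_inter_add_card_union A.1 A'.1
  rw [A.2, A'.2, hcard] at hia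
  omega

lemma exists_big_clique (hk : 1 ≤ k) :
    ∃ Q : Finset (VJ k), Q.card = k + 2 ∧
      ∀ A ∈ Q, ∀ A' ∈ Q, A ≠ A' → (johnson (2*k+1) k).Adj A A' := by
  classical
  obtain ⟨S0, -, hS0⟩ := Finset.exists_subset_card_eq
    (s := (Finset.univ : Finset (Fin (2*k+1)))) (n := k-1)
    (by simp; omega)
  have hcomp : (S0ᶜ : Finset (Fin (2*k+1))).card = k + 2 := by
    rw [Finset.card_compl, hS0]
    simp
    omega
  have hcard : ∀ x : {x // x ∈ (S0ᶜ : Finset (Fin (2*k+1)))}, (insert x.1 S0).card = k := by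
    intro x
    rw [Finset.card_insert_of_notMem (Finset.mem_compl.mp x.2), hS0]
    omega
  refine ⟨(S0ᶜ).attach.image (fun x => (⟨insert x.1 S0, hcard x⟩ : VJ k)), ?_, ?_⟩
  · have hinj : Function.Injective
        (fun x : {x // x ∈ (S0ᶜ : Finset (Fin (2*k+1)))} => (⟨insert x.1 S0, hcard x⟩ : VJ k)) := by
      intro x y h
      have h' : insert x.1 S0 = insert y.1 S0 := congrArg Subtype.val h
      have hx : x.1 ∈ insert y.1 S0 := h' ▸ Finset.mem_insert_self _ _
      rcases Finset.mem_insert.mp hx with h1 | h1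
      · exact Subtype.ext h1
      · exact absurd h1 (Finset.mem_compl.mp x.2)
    rw [Finset.card_image_of_injective _ hinj, Finset.card_attach, hcomp]
  · intro A hA A' hA' hne
    obtain ⟨x, -, rfl⟩ := Finset.mem_image.mp hA
    obtain ⟨y, -, rfl⟩ := Finset.mem_image.mp hA'
    have hxy : x.1 ≠ y.1 := fun h => hne (by ext : 2; simp [h])
    refine ⟨hne, ?_⟩
    have hint : insert x.1 S0 ∩ insert y.1 S0 = S0 := by
      ext a
      simp only [Finset.mem_inter, Finset.mem_insert]
      constructor
      · rintro ⟨h1 | h1, h2 | h2⟩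
        · exact absurd (h1.symm.trans h2) hxy
        · exact h2
        · exact h1
        · exact h1
      · intro h
        exact ⟨Or.inr h, Or.inr h⟩
    simpa [hint, hS0]

end BKJaux

namespace BKJaux

lemma BK_decomp (k : ℕ) (hk : 1 ≤ k) {ι : Type} [Fintype ι] {T : SimpleGraph ι}
    (hT : T.IsTree) (D : TreeDecomp (johnson (2*k+1) k) T) :
    ∃ (ι' : Type) (_ : Fintype ι') (T' : SimpleGraph ι'), T'.IsTree ∧
      ∃ D' : TreeDecomp (bipartiteKneser (2*k+1) k) T',
        (Finset.univ.sup fun i => (D'.bag i).card) ≤ Finset.univ.sup fun i => (D.bag i).card := by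
  classical
  have hnk : 2*k+1 - k = k+1 := by omega
  have hfB : ∀ B : VB k, ∃ i, ∀ A ∈ CB k B, A ∈ D.bag i := fun B =>
    clique_in_bag hT D (CB k B)
      (fun A hA A' hA' hne => johnson_adj_of_subset k hk hA hA' hne)
  choose f hf using hfB
  refine ⟨ι ⊕ VB k, inferInstance, leafExtend T f, leafExtend_isTree hT, ?_⟩
  set M := Finset.univ.sup (fun i => (D.bag i).card) with hM
  have hM2 : k + 2 ≤ M := by
    obtain ⟨Q, hQcard, hQ⟩ := exists_big_clique k hk
    obtain ⟨i, hi⟩ := clique_in_bag hT D Q hQ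
    calc k + 2 = Q.card := hQcard.symm
      _ ≤ (D.bag i).card := Finset.card_le_card (fun A hA => hi A hA)
      _ ≤ M := by rw [hM]; exact Finset.le_sup (f := fun i => (D.bag i).card) (Finset.mem_univ i)
  set bag' : ι ⊕ VB k → Finset (VBK k) :=
    Sum.elim (fun i => (D.bag i).image (em k))
      (fun B => ((CB k B).image (em k)) ∪ {vb k B}) with hbag'
  have hmem_inl : ∀ (v : VBK k) (i : ι), v ∈ bag' (Sum.inl i) ↔
      ∃ h : v.1.card = k, (⟨v.1, h⟩ : VJ k) ∈ D.bag i := by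
    intro v i
    simp only [hbag', Sum.elim_inl, Finset.mem_image]
    constructor
    · rintro ⟨A, hA, rfl⟩
      exact ⟨A.2, hA⟩
    · rintro ⟨h, hA⟩
      exact ⟨⟨v.1, h⟩, hA, Subtype.ext rfl⟩
  have hmem_inr : ∀ (v : VBK k) (B : VB k), v ∈ bag' (Sum.inr B) ↔
      ((∃ _ : v.1.card = k, v.1 ⊆ B.1) ∨ v.1 = B.1) := by
    intro v B
    simp only [hbag', Sum.elim_inr, Finset.mem_union, Finset.mem_image, Finset.mem_singleton]
    constructor
    · rintro (⟨A, hA, rfl⟩ | rfl)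
      · exact Or.inl ⟨A.2, (mem_CB k).mp hA⟩
      · exact Or.inr rfl
    · rintro (⟨h, hsub⟩ | h)
      · exact Or.inl ⟨⟨v.1, h⟩, (mem_CB k).mpr hsub, Subtype.ext rfl⟩
      · exact Or.inr (Subtype.ext h)
  refine ⟨⟨bag', ?_, ?_, ?_⟩, ?_⟩
  · -- cover
    intro v
    rcases v.2 with h | h
    · obtain ⟨i, hi⟩ := D.cover ⟨v.1, h⟩
      exact ⟨Sum.inl i, (hmem_inl v i).mpr ⟨h, hi⟩⟩
    · have h' : v.1.card = k + 1 := by omega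
      exact ⟨Sum.inr ⟨v.1, h'⟩, (hmem_inr v ⟨v.1, h'⟩).mpr (Or.inr rfl)⟩
  · -- edgeCover
    intro u v huv
    have key : ∀ a b : VBK k, a.1 ⊂ b.1 → ∃ x, a ∈ bag' x ∧ b ∈ bag' x := by
      intro a b hss
      have hlt : a.1.card < b.1.card := Finset.card_lt_card hss
      have ha2 : a.1.card = k ∨ a.1.card = k + 1 := by
        rcases a.2 with h | h
        · exact Or.inl h
        · right; omega
      have hb2 : b.1.card = k ∨ b.1.card = k + 1 := by
        rcases b.2 with h | h
        · exact Or.inl h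
        · right; omega
      have hak : a.1.card = k := by omega
      have hbk : b.1.card = k+1 := by omega
      refine ⟨Sum.inr ⟨b.1, hbk⟩, ?_, ?_⟩
      · exact (hmem_inr a _).mpr (Or.inl ⟨hak, hss.subset⟩)
      · exact (hmem_inr b _).mpr (Or.inr rfl)
    rcases huv with h | h
    · exact key u v h
    · obtain ⟨x, h1, h2⟩ := key v u h
      exact ⟨x, h2, h1⟩
  · -- subtree
    intro v
    by_cases hvk : v.1.card = k
    · set A : VJ k := ⟨v.1, hvk⟩ with hA
      have hiff_inl : ∀ i, v ∈ bag' (Sum.inl i) ↔ A ∈ D.bag i := by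
        intro i
        rw [hmem_inl]
        constructor
        · rintro ⟨h, hA'⟩; exact hA'
        · intro h; exact ⟨hvk, h⟩
      have hiff_inr : ∀ B, v ∈ bag' (Sum.inr B) ↔ v.1 ⊆ B.1 := by
        intro B
        rw [hmem_inr]
        constructor
        · rintro (⟨h, hsub⟩ | h)
          · exact hsub
          · exfalso
            have := B.2
            rw [← h] at this
            omega
        · intro h; exact Or.inl ⟨hvk, h⟩
      set Sv : Set (ι ⊕ VB k) := {x | v ∈ bag' x} with hSv
      obtain ⟨i0, hi0⟩ := D.cover A
      have hi0' : Sum.inl i0 ∈ Sv := (hiff_inl i0).mpr hi0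
      have hstep : ∀ x (hx : x ∈ Sv), ∃ i, ∃ hi : Sum.inl i ∈ Sv,
          ((leafExtend T f).induce Sv).Reachable ⟨x, hx⟩ ⟨Sum.inl i, hi⟩ := by
        intro x hx
        cases x with
        | inl i => exact ⟨i, hx, Reachable.refl _⟩
        | inr B =>
            have hsub : v.1 ⊆ B.1 := (hiff_inr B).mp hx
            have hfm : Sum.inl (f B) ∈ Sv :=
              (hiff_inl (f B)).mpr (hf B A ((mem_CB k).mpr hsub))
            refine ⟨f B, hfm, Adj.reachable ?_⟩
            show (leafExtend T f).Adj (Sum.inr B) (Sum.inl (f B))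
            simp
      have hinl2 : ∀ i j (hi : Sum.inl i ∈ Sv) (hj : Sum.inl j ∈ Sv),
          ((leafExtend T f).induce Sv).Reachable ⟨Sum.inl i, hi⟩ ⟨Sum.inl j, hj⟩ := by
        intro i j hi hj
        have hiA : i ∈ {i | A ∈ D.bag i} := (hiff_inl i).mp hi
        have hjA : j ∈ {i | A ∈ D.bag i} := (hiff_inl j).mp hj
        obtain ⟨w, hw⟩ := exists_walk_of_induce_reachable hiA hjA
          ((D.subtree A).preconnected ⟨i, hiA⟩ ⟨j, hjA⟩)
        refine reachable_induce_of_walk hi hj (w.map (leafExtendHom T f)) ?_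
        intro x hx
        replace hx : x ∈ w.support.map (leafExtendHom T f) := by rw [← Walk.support_map]; exact hx
        obtain ⟨i', hi', rfl⟩ := List.mem_map.mp hx
        exact (hiff_inl i').mpr (hw i' hi')
      rw [connected_iff]
      constructor
      · intro x y
        obtain ⟨i, hi, hri⟩ := hstep x.1 x.2
        obtain ⟨j, hj, hrj⟩ := hstep y.1 y.2
        exact (hri.trans (hinl2 i j hi hj)).trans hrj.symm
      · exact ⟨⟨Sum.inl i0, hi0'⟩⟩
    · have hvk1 : v.1.card = k+1 := by
        rcases v.2 with h | h
        · exact absurd h hvk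
        · omega
      set B0 : VB k := ⟨v.1, hvk1⟩ with hB0
      have hchar : ∀ x, v ∈ bag' x ↔ x = Sum.inr B0 := by
        intro x
        cases x with
        | inl i =>
            rw [hmem_inl]
            constructor
            · rintro ⟨h, -⟩; exact absurd h hvk
            · intro h; exact absurd h (by simp)
        | inr B =>
            rw [hmem_inr]
            constructor
            · rintro (⟨h, -⟩ | h)
              · exact absurd h hvk
              · exact congrArg Sum.inr (Subtype.ext h.symm)
            · intro h
              have hB : B = B0 := Sum.inr.inj h
              subst hB
              exact Or.inr rfl
      rw [connected_iff]
      constructor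
      · intro x y
        have hx := (hchar x.1).mp x.2
        have hy := (hchar y.1).mp y.2
        have hxy : x = y := Subtype.ext (hx.trans hy.symm)
        rw [hxy]
      · exact ⟨⟨Sum.inr B0, (hchar _).mpr rfl⟩⟩
  · -- width bound
    apply Finset.sup_le
    intro x _
    show (bag' x).card ≤ M
    cases x with
    | inl i =>
        calc (bag' (Sum.inl i)).card ≤ (D.bag i).card := by
              simp only [hbag', Sum.elim_inl]
              exact Finset.card_image_le
          _ ≤ M := by rw [hM]; exact Finset.le_sup (f := fun i => (D.bag i).card) (Finset.mem_univ i)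
    | inr B =>
        have h1 : (bag' (Sum.inr B)).card ≤ ((CB k B).image (em k)).card + 1 := by
          simp only [hbag', Sum.elim_inr]
          exact (Finset.card_union_le _ _).trans (by simp)
        have h2 : ((CB k B).image (em k)).card ≤ k + 1 :=
          Finset.card_image_le.trans (CB_card k B)
        omega

end BKJaux

lemma punit_bot_isTree : (⊥ : SimpleGraph PUnit).IsTree := by
  constructor
  · rw [SimpleGraph.connected_iff]
    exact ⟨fun u v => by rw [Subsingleton.elim u v], ⟨PUnit.unit⟩⟩
  · intro v c hc
    cases c with
    | nil =>
        rw [SimpleGraph.Walk.isCycle_def] at hc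
        exact hc.2.1 rfl
    | cons h _ => simp at h

/-- The trivial tree decomposition with a single bag. -/
def trivialDecomp {V : Type*} [Fintype V] (G : SimpleGraph V) :
    TreeDecomp G (⊥ : SimpleGraph PUnit) where
  bag _ := Finset.univ
  cover v := ⟨PUnit.unit, Finset.mem_univ v⟩
  edgeCover u v _ := ⟨PUnit.unit, Finset.mem_univ u, Finset.mem_univ v⟩
  subtree v := by
    rw [SimpleGraph.connected_iff]
    refine ⟨fun x y => by rw [Subsingleton.elim x y], ⟨⟨PUnit.unit, ?_⟩⟩⟩
    simp

/-- For every positive integer `k`, the treewidth of the bipartite Kneser graph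
`BK(2k+1,k)` is at most the treewidth of the Johnson graph `J(2k+1,k)`. -/
theorem treewidth_BK_le_johnson (k : ℕ) (hk : 1 ≤ k) :
    treewidth (bipartiteKneser (2 * k + 1) k) ≤ treewidth (johnson (2 * k + 1) k) := by
  classical
  have hJne : { w : ℕ | ∃ (ι : Type) (_ : Fintype ι) (T : SimpleGraph ι),
      T.IsTree ∧ ∃ D : TreeDecomp (johnson (2 * k + 1) k) T,
        (Finset.univ.sup fun i => (D.bag i).card) - 1 = w }.Nonempty :=
    ⟨_, PUnit, inferInstance, ⊥, punit_bot_isTree, trivialDecomp _, rfl⟩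
  obtain ⟨ι, instι, T, hTree, D, hD⟩ := Nat.sInf_mem hJne
  obtain ⟨ι', instι', T', hTree', D', hsup⟩ := @BKJaux.BK_decomp k hk ι instι T hTree D
  calc treewidth (bipartiteKneser (2 * k + 1) k)
      ≤ (Finset.univ.sup fun i => (D'.bag i).card) - 1 :=
        Nat.sInf_le ⟨ι', instι', T', hTree', D', rfl⟩
    _ ≤ (Finset.univ.sup fun i => (D.bag i).card) - 1 := Nat.sub_le_sub_right hsup 1
    _ = treewidth (johnson (2 * k + 1) k) := by unfold treewidth; exact hD
end

section
/- For any finite graph G, there exists a set X ⊆ V(G) with |X| ≤ tw(G) + 1 together with a partition of V(G) − X into sets A and B such that no edge of G joins a vertex of A to a vertex of B and |V(G)−X|/3 ≤ |A|, |B| ≤ 2|V(G)−X|/3. -/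
namespace BalSep

open SimpleGraph Finset

open scoped Classical
set_option linter.unusedSectionVars false
set_option linter.unusedVariables false

variable {ι : Type} {T : SimpleGraph ι}

noncomputable def tpath (hT : T.IsTree) (i j : ι) : T.Walk i j :=
  (hT.existsUnique_path i j).exists.choose

lemma tpath_isPath (hT : T.IsTree) (i j : ι) : (tpath hT i j).IsPath :=
  (hT.existsUnique_path i j).exists.choose_spec

lemma tpath_eq (hT : T.IsTree) {i j : ι} (p : T.Walk i j) (hp : p.IsPath) :
    p = tpath hT i j :=
  (hT.existsUnique_path i j).unique hp (tpath_isPath hT i j)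

/-- `side hT s t i` : node `i` lies on the `s`-side of the (oriented) pair `(s,t)`,
i.e. the unique path from `i` to `t` passes through `s`. -/
def side (hT : T.IsTree) (s t i : ι) : Prop := s ∈ (tpath hT i t).support

lemma side_self (hT : T.IsTree) (s t : ι) : side hT s t s :=
  (tpath hT s t).start_mem_support

lemma not_side_end (hT : T.IsTree) {s t : ι} (h : s ≠ t) : ¬ side hT s t t := by
  intro hs
  have hnil : (Walk.nil : T.Walk t t) = tpath hT t t := tpath_eq hT _ Walk.IsPath.nil
  rw [side, ← hnil] at hs
  simp at hs
  exact h hs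

lemma side_total (hT : T.IsTree) {s t : ι} (h : T.Adj s t) {i : ι}
    (hns : ¬ side hT s t i) : side hT t s i := by
  have hs : s ∉ (tpath hT i t).support := hns
  have hq : ((tpath hT i t).concat h.symm).IsPath := by
    rw [← Walk.isPath_reverse_iff, Walk.reverse_concat]
    exact (tpath_isPath hT i t).reverse.cons
      (by rwa [Walk.support_reverse, List.mem_reverse])
  have heq := tpath_eq hT _ hq
  show t ∈ (tpath hT i s).support
  rw [← heq]
  simp [Walk.support_concat]

lemma side_asymm (hT : T.IsTree) {s t : ι} (h : T.Adj s t) {i : ι}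
    (hs : side hT s t i) : ¬ side hT t s i := by
  intro ht'
  have hq : ((tpath hT i t).takeUntil s hs).IsPath := (tpath_isPath hT i t).takeUntil hs
  rw [side, ← tpath_eq hT _ hq] at ht'
  have hnd : ((tpath hT i t).support).Nodup := (tpath_isPath hT i t).support_nodup
  have hspec := (tpath hT i t).take_spec hs
  have hsup : (tpath hT i t).support
      = ((tpath hT i t).takeUntil s hs).support
        ++ ((tpath hT i t).dropUntil s hs).support.tail := by
    conv_lhs => rw [← hspec]
    rw [Walk.support_append]
  have httail : t ∈ ((tpath hT i t).dropUntil s hs).support.tail := by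
    have hend := ((tpath hT i t).dropUntil s hs).end_mem_support
    rw [Walk.support_eq_cons] at hend
    rcases List.mem_cons.1 hend with h1 | h1
    · exact absurd h1 h.ne'
    · exact h1
  rw [hsup] at hnd
  exact List.disjoint_of_nodup_append hnd ht' httail

lemma mem_tpath_symm (hT : T.IsTree) {i j a : ι} :
    a ∈ (tpath hT i j).support ↔ a ∈ (tpath hT j i).support := by
  have : (tpath hT i j).reverse = tpath hT j i :=
    tpath_eq hT _ (tpath_isPath hT i j).reverse
  rw [← this, Walk.support_reverse, List.mem_reverse]

lemma cross_fst (hT : T.IsTree) {s t : ι} (h : T.Adj s t) {i j : ι}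
    (hi : side hT s t i) (hj : side hT t s j) : s ∈ (tpath hT i j).support := by
  by_contra hns
  have h1 : s ∉ (tpath hT j t).support := side_asymm hT h.symm hj
  set w := (tpath hT i j).append (tpath hT j t) with hw
  have hsw : s ∉ w.support := by
    rw [hw, Walk.support_append]
    intro hmem
    rcases List.mem_append.1 hmem with h2 | h2
    · exact hns h2
    · exact h1 (List.mem_of_mem_tail h2)
  have hbp : w.bypass = tpath hT i t := tpath_eq hT _ w.bypass_isPath
  have : s ∈ w.bypass.support := by rw [hbp]; exact hi
  exact hsw (w.support_bypass_subset this)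

lemma cross_snd (hT : T.IsTree) {s t : ι} (h : T.Adj s t) {i j : ι}
    (hi : side hT s t i) (hj : side hT t s j) : t ∈ (tpath hT i j).support := by
  rw [mem_tpath_symm hT]
  exact cross_fst hT h.symm hj hi

lemma tpath_adj_support (hT : T.IsTree) {s t : ι} (h : T.Adj s t) :
    (tpath hT s t).support = [s, t] := by
  have hp : (Walk.cons h Walk.nil : T.Walk s t).IsPath := by
    refine Walk.IsPath.nil.cons ?_
    simp [h.ne]
  rw [← tpath_eq hT _ hp]
  simp

lemma side_nbr_disjoint (hT : T.IsTree) {s s' t : ι} (hst : T.Adj s t)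
    (hs't : T.Adj s' t) (hss' : s ≠ s') {i : ι}
    (hi : side hT s t i) : ¬ side hT s' t i := by
  intro hi'
  -- s lies on the path from i to s'
  have hq : ((tpath hT i t).takeUntil s' hi').IsPath := (tpath_isPath hT i t).takeUntil hi'
  have htake : (tpath hT i t).takeUntil s' hi' = tpath hT i s' := tpath_eq hT _ hq
  have hd : ((tpath hT i t).dropUntil s' hi').IsPath := (tpath_isPath hT i t).dropUntil hi'
  have hdrop : (tpath hT i t).dropUntil s' hi' = tpath hT s' t := tpath_eq hT _ hd
  have hsupp : (tpath hT i t).support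
      = ((tpath hT i t).takeUntil s' hi').support
        ++ ((tpath hT i t).dropUntil s' hi').support.tail := by
    conv_lhs => rw [← (tpath hT i t).take_spec hi']
    rw [Walk.support_append]
  have htail : ((tpath hT i t).dropUntil s' hi').support.tail = [t] := by
    rw [hdrop, tpath_adj_support hT hs't]
    rfl
  have hsmem : s ∈ (tpath hT i s').support := by
    have := hi
    rw [side, hsupp, htail] at this
    rcases List.mem_append.1 this with h1 | h1
    · rwa [htake] at h1
    · simp at h1; exact absurd h1 hst.ne
  -- t lies on the path from s to s'
  have h1 : ¬ side hT s' t s := by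
    intro hmem
    rw [side, tpath_adj_support hT hst] at hmem
    simp at hmem
    rcases hmem with h2 | h2
    · exact hss' h2.symm
    · exact hs't.ne h2
  have h2 : side hT t s' s := side_total hT hs't h1
  -- hence t ∈ support of (tpath i s')
  have hd2 : ((tpath hT i s').dropUntil s hsmem).IsPath := (tpath_isPath hT i s').dropUntil hsmem
  have hdrop2 : (tpath hT i s').dropUntil s hsmem = tpath hT s s' := tpath_eq hT _ hd2
  have htmem : t ∈ (tpath hT i s').support := by
    have : t ∈ ((tpath hT i s').dropUntil s hsmem).support := by rw [hdrop2]; exact h2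
    exact (tpath hT i s').support_dropUntil_subset hsmem this
  exact side_asymm hT hs't hi' htmem

lemma exists_nbr_side (hT : T.IsTree) {i t : ι} (hit : i ≠ t) :
    ∃ s, T.Adj s t ∧ side hT s t i := by
  obtain ⟨x, h, p', heq⟩ := Walk.exists_eq_cons_of_ne (Ne.symm hit) (tpath hT i t).reverse
  refine ⟨x, h.symm, ?_⟩
  show x ∈ (tpath hT i t).support
  rw [← List.mem_reverse, ← Walk.support_reverse, heq]
  simp [p'.start_mem_support]

section Decomp

variable {V : Type*} [Fintype V] [DecidableEq V] [Fintype ι] {G : SimpleGraph V}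
variable (hT : T.IsTree) (D : TreeDecomp G T)

noncomputable def VS (s t : ι) : Finset V :=
  Finset.univ.filter (fun v => ∃ i, side hT s t i ∧ v ∈ D.bag i)

lemma mem_VS {v : V} {s t : ι} :
    v ∈ VS hT D s t ↔ ∃ i, side hT s t i ∧ v ∈ D.bag i := by
  simp [VS]

lemma bag_of_mem_tpath {v : V} {i j : ι} (hi : v ∈ D.bag i) (hj : v ∈ D.bag j)
    {m : ι} (hm : m ∈ (tpath hT i j).support) : v ∈ D.bag m := by
  obtain ⟨w0⟩ := (D.subtree v).preconnected ⟨i, hi⟩ ⟨j, hj⟩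
  let w : T.Walk i j := w0.map (SimpleGraph.Embedding.induce {i : ι | v ∈ D.bag i}).toHom
  have hbp : w.bypass = tpath hT i j := tpath_eq hT _ w.bypass_isPath
  have hmw : m ∈ w.support := w.support_bypass_subset (by rw [hbp]; exact hm)
  rw [show w.support = _ from Walk.support_map _ _] at hmw
  obtain ⟨⟨m', hm'⟩, -, rfl⟩ := List.mem_map.1 hmw
  exact hm'

lemma VS_total {s t : ι} (h : T.Adj s t) (v : V) :
    v ∈ VS hT D s t ∨ v ∈ VS hT D t s := by
  obtain ⟨i, hi⟩ := D.cover v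
  by_cases hside : side hT s t i
  · exact Or.inl ((mem_VS hT D).2 ⟨i, hside, hi⟩)
  · exact Or.inr ((mem_VS hT D).2 ⟨i, side_total hT h hside, hi⟩)

lemma VS_inter_subset {s t : ι} (h : T.Adj s t) {v : V}
    (h1 : v ∈ VS hT D s t) (h2 : v ∈ VS hT D t s) : v ∈ D.bag s ∧ v ∈ D.bag t := by
  obtain ⟨i, hi, hbi⟩ := (mem_VS hT D).1 h1
  obtain ⟨j, hj, hbj⟩ := (mem_VS hT D).1 h2
  exact ⟨bag_of_mem_tpath hT D hbi hbj (cross_fst hT h hi hj),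
    bag_of_mem_tpath hT D hbi hbj (cross_snd hT h hi hj)⟩

lemma no_cross_adj {s t : ι} (h : T.Adj s t) {u w : V}
    (hu : u ∈ VS hT D s t) (hu' : u ∉ VS hT D t s)
    (hw : w ∈ VS hT D t s) (hw' : w ∉ VS hT D s t) : ¬ G.Adj u w := by
  intro hadj
  obtain ⟨m, hum, hwm⟩ := D.edgeCover u w hadj
  by_cases hm : side hT s t m
  · exact hw' ((mem_VS hT D).2 ⟨m, hm, hwm⟩)
  · exact hu' ((mem_VS hT D).2 ⟨m, side_total hT h hm, hum⟩)

/-- The branch piece of the edge `(s,t)` : vertices exclusively on the `s`-side. -/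
noncomputable def PP (s t : ι) : Finset V := VS hT D s t \ VS hT D t s

lemma PP_eq_sdiff_bag {s t : ι} (h : T.Adj s t) :
    PP hT D s t = VS hT D s t \ D.bag t := by
  ext v
  simp only [PP, Finset.mem_sdiff, and_congr_right_iff]
  intro hv
  constructor
  · intro hv2 hbag
    exact hv2 ((mem_VS hT D).2 ⟨t, side_self hT t s, hbag⟩)
  · intro hbag hv2
    exact hbag (VS_inter_subset hT D h hv hv2).2

lemma PP_disjoint {s s' t : ι} (hst : T.Adj s t) (hs't : T.Adj s' t) (hss' : s ≠ s') :
    Disjoint (PP hT D s t) (PP hT D s' t) := by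
  rw [Finset.disjoint_left]
  intro v hv hv'
  have hvb : v ∉ D.bag t := by
    rw [PP_eq_sdiff_bag hT D hst, Finset.mem_sdiff] at hv
    exact hv.2
  rw [PP, Finset.mem_sdiff] at hv hv'
  obtain ⟨i, hi, hbi⟩ := (mem_VS hT D).1 hv.1
  obtain ⟨j, hj, hbj⟩ := (mem_VS hT D).1 hv'.1
  have hi2 : side hT t s' i := side_total hT hs't (side_nbr_disjoint hT hst hs't hss' hi)
  exact hvb (bag_of_mem_tpath hT D hbj hbi (cross_snd hT hs't hj hi2))

lemma sdiff_bag_eq_biUnion (t : ι) :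
    Finset.univ \ D.bag t = (T.neighborFinset t).biUnion (fun s => PP hT D s t) := by
  ext v
  simp only [Finset.mem_sdiff, Finset.mem_univ, true_and, Finset.mem_biUnion,
    SimpleGraph.mem_neighborFinset]
  constructor
  · intro hvb
    obtain ⟨i, hi⟩ := D.cover v
    have hit : i ≠ t := fun hi' => hvb (hi' ▸ hi)
    obtain ⟨s, hadj, hside⟩ := exists_nbr_side hT hit
    refine ⟨s, hadj.symm, ?_⟩
    rw [PP_eq_sdiff_bag hT D hadj, Finset.mem_sdiff]
    exact ⟨(mem_VS hT D).2 ⟨i, hside, hi⟩, hvb⟩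
  · rintro ⟨s, hadj, hv⟩
    rw [PP_eq_sdiff_bag hT D hadj.symm, Finset.mem_sdiff] at hv
    exact hv.2

lemma no_piece_adj {s s' t : ι} (hst : T.Adj s t) (hs't : T.Adj s' t) (hss' : s ≠ s')
    {u w : V} (hu : u ∈ PP hT D s t) (hw : w ∈ PP hT D s' t) : ¬ G.Adj u w := by
  intro hadj
  obtain ⟨m, hum, hwm⟩ := D.edgeCover u w hadj
  by_cases hm : side hT s t m
  · have hwb : w ∉ D.bag t := by
      rw [PP_eq_sdiff_bag hT D hs't, Finset.mem_sdiff] at hw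
      exact hw.2
    have hw2 : w ∈ PP hT D s t := by
      rw [PP_eq_sdiff_bag hT D hst, Finset.mem_sdiff]
      exact ⟨(mem_VS hT D).2 ⟨m, hm, hwm⟩, hwb⟩
    exact (Finset.disjoint_left.1 (PP_disjoint hT D hst hs't hss')) hw2 hw
  · have hu2 : u ∈ VS hT D t s := (mem_VS hT D).2 ⟨m, side_total hT hst hm, hum⟩
    rw [PP, Finset.mem_sdiff] at hu
    exact hu.2 hu2

/-- the `s`-side of the edge `(s,t)` is light. -/
noncomputable def light (s t : ι) : Prop :=
  3 * (PP hT D s t).card < (PP hT D s t).card + (PP hT D t s).card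

lemma exists_sink (htot : ∀ a b : ι, T.Adj a b → light hT D a b ∨ light hT D b a) :
    ∃ t : ι, ∀ s : ι, T.Adj s t → light hT D s t := by
  have hne : Nonempty ι := hT.isConnected.nonempty
  set f : ι → ℕ := fun i =>
    (Finset.univ.filter (fun p : ι × ι =>
      T.Adj p.1 p.2 ∧ light hT D p.1 p.2 ∧ side hT p.2 p.1 i)).card with hf
  obtain ⟨t, -, ht⟩ := Finset.exists_max_image Finset.univ f Finset.univ_nonempty
  refine ⟨t, fun s hst => ?_⟩
  rcases htot s t hst with h | h
  · exact h
  exfalso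
  have hkey : f t < f s := by
    have hsub : (Finset.univ.filter (fun p : ι × ι =>
        T.Adj p.1 p.2 ∧ light hT D p.1 p.2 ∧ side hT p.2 p.1 t))
        ⊆ (Finset.univ.filter (fun p : ι × ι =>
        T.Adj p.1 p.2 ∧ light hT D p.1 p.2 ∧ side hT p.2 p.1 s)).erase (t, s) := by
      intro p hp
      simp only [Finset.mem_filter, Finset.mem_univ, true_and] at hp
      obtain ⟨hadj, hlight, hside⟩ := hp
      have hne1 : p ≠ (t, s) := by
        rintro rfl
        exact not_side_end hT hst.ne hside
      rw [Finset.mem_erase]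
      refine ⟨hne1, ?_⟩
      simp only [Finset.mem_filter, Finset.mem_univ, true_and]
      refine ⟨hadj, hlight, ?_⟩
      by_contra hh
      have hs2 : side hT p.1 p.2 s := side_total hT hadj.symm hh
      have hmem1 : p.1 ∈ (tpath hT s t).support := cross_fst hT hadj hs2 hside
      have hmem2 : p.2 ∈ (tpath hT s t).support := cross_snd hT hadj hs2 hside
      rw [tpath_adj_support hT hst] at hmem1 hmem2
      simp only [List.mem_cons, List.mem_singleton, List.not_mem_nil, or_false] at hmem1 hmem2
      have hne2 : p ≠ (s, t) := by
        rintro rfl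
        dsimp [light] at hlight h
        omega
      rcases hmem1 with h1 | h1 <;> rcases hmem2 with h2 | h2
      · exact hadj.ne (h1.trans h2.symm)
      · exact hne2 (Prod.ext h1 h2)
      · exact hne1 (Prod.ext h1 h2)
      · exact hadj.ne (h1.trans h2.symm)
    have hmem : (t, s) ∈ (Finset.univ.filter (fun p : ι × ι =>
        T.Adj p.1 p.2 ∧ light hT D p.1 p.2 ∧ side hT p.2 p.1 s)) := by
      simp only [Finset.mem_filter, Finset.mem_univ, true_and]
      exact ⟨hst.symm, h, side_self hT s t⟩
    calc f t ≤ _ := Finset.card_le_card hsub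
    _ < f s := Finset.card_erase_lt_of_mem hmem
  exact absurd (ht s (Finset.mem_univ s)) (Nat.not_le.2 hkey)

end Decomp

lemma group_lemma {α : Type*} [DecidableEq α] (s : Finset α) (f : α → ℕ)
    (h : ∀ a ∈ s, 3 * f a ≤ 2 * ∑ x ∈ s, f x) :
    ∃ u ⊆ s, (∑ x ∈ s, f x) ≤ 3 * ∑ x ∈ u, f x ∧
      3 * (∑ x ∈ u, f x) ≤ 2 * ∑ x ∈ s, f x := by
  classical
  set C := s.powerset.filter (fun u => (∑ x ∈ s, f x) ≤ 3 * ∑ x ∈ u, f x) with hC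
  have hsC : s ∈ C := by
    simp only [hC, Finset.mem_filter, Finset.mem_powerset]
    exact ⟨Finset.Subset.refl s, by omega⟩
  obtain ⟨u, huC, humin⟩ := Finset.exists_min_image C (fun u => ∑ x ∈ u, f x) ⟨s, hsC⟩
  simp only [hC, Finset.mem_filter, Finset.mem_powerset] at huC
  obtain ⟨hus, huT⟩ := huC
  refine ⟨u, hus, huT, ?_⟩
  by_cases hzero : ∀ a ∈ u, f a = 0
  · have h0 : ∑ x ∈ u, f x = 0 := Finset.sum_eq_zero hzero
    omega
  push_neg at hzero
  obtain ⟨a, hau, hfa⟩ := hzero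
  have herase : (∑ x ∈ u.erase a, f x) + f a = ∑ x ∈ u, f x := Finset.sum_erase_add u f hau
  have ha3 : 3 * f a ≤ 2 * ∑ x ∈ s, f x := h a (hus hau)
  by_cases hbig : (∑ x ∈ s, f x) ≤ 3 * f a
  · have h1 : ({a} : Finset α) ∈ C := by
      simp only [hC, Finset.mem_filter, Finset.mem_powerset, Finset.singleton_subset_iff,
        Finset.sum_singleton]
      exact ⟨hus hau, hbig⟩
    have h2 := humin _ h1
    rw [Finset.sum_singleton] at h2
    omega
  · have h1 : u.erase a ∉ C := by
      intro hmem
      have h2 := humin _ hmem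
      omega
    have h2 : ¬ ((∑ x ∈ s, f x) ≤ 3 * ∑ x ∈ u.erase a, f x) := by
      intro hh
      exact h1 (by
        simp only [hC, Finset.mem_filter, Finset.mem_powerset]
        exact ⟨(Finset.erase_subset a u).trans hus, hh⟩)
    omega

lemma rat_balance {x y : ℕ} (h1 : x + y ≤ 3 * x) (h2 : x + y ≤ 3 * y) :
    ((x + y : ℕ) : ℚ) / 3 ≤ (x : ℚ) ∧ (x : ℚ) ≤ 2 * ((x + y : ℕ) : ℚ) / 3 ∧
    ((x + y : ℕ) : ℚ) / 3 ≤ (y : ℚ) ∧ (y : ℚ) ≤ 2 * ((x + y : ℕ) : ℚ) / 3 := by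
  have c1 : (x : ℚ) + y ≤ 3 * x := by exact_mod_cast h1
  have c2 : (x : ℚ) + y ≤ 3 * y := by exact_mod_cast h2
  push_cast
  refine ⟨by linarith, by linarith, by linarith, by linarith⟩

end BalSep

set_option maxHeartbeats 1000000

open BalSep SimpleGraph Finset

/-- Corollary 2.6: every finite graph `G` has a set `X` of at most `tw(G)+1` vertices and
a partition of the remaining vertices into sets `A` and `B` with no edge between `A` and
`B` and `|V−X|/3 ≤ |A|,|B| ≤ 2|V−X|/3`. -/
theorem exists_balanced_separator {V : Type*} [Fintype V] [DecidableEq V]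
    (G : SimpleGraph V) :
    ∃ X A B : Finset V,
      X.card ≤ treewidth G + 1 ∧
      A ∪ B = Finset.univ \ X ∧
      Disjoint A B ∧
      (∀ a ∈ A, ∀ b ∈ B, ¬ G.Adj a b) ∧
      ((Finset.univ \ X).card : ℚ) / 3 ≤ (A.card : ℚ) ∧
      (A.card : ℚ) ≤ 2 * ((Finset.univ \ X).card : ℚ) / 3 ∧
      ((Finset.univ \ X).card : ℚ) / 3 ≤ (B.card : ℚ) ∧
      (B.card : ℚ) ≤ 2 * ((Finset.univ \ X).card : ℚ) / 3 := by

  classical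
  -- the defining set of `treewidth` is nonempty
  have hne : { w : ℕ | ∃ (ι : Type) (_ : Fintype ι) (T : SimpleGraph ι),
      T.IsTree ∧ ∃ D : TreeDecomp G T,
      (Finset.univ.sup fun i => (D.bag i).card) - 1 = w }.Nonempty := by
    refine ⟨_, PUnit, inferInstance, ⊥, ⟨?_, ?_⟩,
      ⟨⟨fun _ => Finset.univ, fun v => ⟨PUnit.unit, Finset.mem_univ v⟩,
        fun u v _ => ⟨PUnit.unit, Finset.mem_univ u, Finset.mem_univ v⟩,
        fun v => ?_⟩, rfl⟩⟩
    · exact ⟨fun a b => by rw [Subsingleton.elim a b]⟩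
    · intro v c hc
      cases c with
      | nil => exact hc.ne_nil rfl
      | cons h p => simp at h
    · exact { preconnected := fun a b => by rw [Subsingleton.elim a b],
              nonempty := ⟨⟨PUnit.unit, Finset.mem_univ v⟩⟩ }
  have hmem : treewidth G ∈ { w : ℕ | ∃ (ι : Type) (_ : Fintype ι) (T : SimpleGraph ι),
      T.IsTree ∧ ∃ D : TreeDecomp G T,
      (Finset.univ.sup fun i => (D.bag i).card) - 1 = w } := Nat.sInf_mem hne
  obtain ⟨ι, iFT, T, hT, D, hD⟩ := hmem
  set k := treewidth G with hk
  have hbag : ∀ i : ι, (D.bag i).card ≤ k + 1 := by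
    intro i
    have h1 : (D.bag i).card ≤ Finset.univ.sup (fun i => (D.bag i).card) :=
      Finset.le_sup (f := fun i => (D.bag i).card) (Finset.mem_univ i)
    omega
  by_cases hedge : ∃ a b : ι, T.Adj a b
  swap
  · -- the tree has a single node: all vertices lie in one bag
    push_neg at hedge
    have hsub : ∀ i j : ι, i = j := by
      intro i j
      obtain ⟨w⟩ := hT.isConnected.preconnected i j
      cases w with
      | nil => rfl
      | cons h p => exact absurd h (hedge _ _)
    have hne2 : Nonempty ι := hT.isConnected.nonempty
    obtain ⟨i₀⟩ := hne2
    have huniv : (Finset.univ : Finset V) ⊆ D.bag i₀ := by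
      intro v _
      obtain ⟨i, hi⟩ := D.cover v
      rwa [hsub i i₀] at hi
    refine ⟨Finset.univ, ∅, ∅, le_trans (Finset.card_le_card huniv) (hbag i₀),
      by simp, by simp, by simp, ?_, ?_, ?_, ?_⟩ <;> simp
  obtain ⟨a0, b0, hab0⟩ := hedge
  by_cases hbal : ∃ s t : ι, T.Adj s t ∧ ¬ light hT D s t ∧ ¬ light hT D t s
  · -- a balanced edge: use its separation
    obtain ⟨s, t, hst, hl1, hl2⟩ := hbal
    have hXbag : VS hT D s t ∩ VS hT D t s ⊆ D.bag t := by
      intro v hv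
      rw [Finset.mem_inter] at hv
      exact (VS_inter_subset hT D hst hv.1 hv.2).2
    have hunion : PP hT D s t ∪ PP hT D t s = Finset.univ \ (VS hT D s t ∩ VS hT D t s) := by
      ext v
      simp only [Finset.mem_union, Finset.mem_sdiff, Finset.mem_univ, true_and,
        Finset.mem_inter, PP]
      have := VS_total hT D hst v
      tauto
    have hdisj : Disjoint (PP hT D s t) (PP hT D t s) := by
      rw [Finset.disjoint_left]
      intro v hv hv'
      rw [PP, Finset.mem_sdiff] at hv hv'
      exact hv.2 hv'.1
    have hadjAB : ∀ a ∈ PP hT D s t, ∀ b ∈ PP hT D t s, ¬ G.Adj a b := by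
      intro a ha b hb
      rw [PP, Finset.mem_sdiff] at ha hb
      exact no_cross_adj hT D hst ha.1 ha.2 hb.1 hb.2
    have hcard : (Finset.univ \ (VS hT D s t ∩ VS hT D t s)).card
        = (PP hT D s t).card + (PP hT D t s).card := by
      rw [← hunion, Finset.card_union_of_disjoint hdisj]
    have hx1 : (PP hT D s t).card + (PP hT D t s).card ≤ 3 * (PP hT D s t).card := by
      dsimp [light] at hl1; omega
    have hx2 : (PP hT D s t).card + (PP hT D t s).card ≤ 3 * (PP hT D t s).card := by
      dsimp [light] at hl2; omega
    obtain ⟨r1, r2, r3, r4⟩ := rat_balance hx1 hx2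
    refine ⟨VS hT D s t ∩ VS hT D t s, PP hT D s t, PP hT D t s,
      le_trans (Finset.card_le_card hXbag) (hbag t), hunion, hdisj, hadjAB, ?_, ?_, ?_, ?_⟩ <;>
      rw [hcard]
    exacts [r1, r2, r3, r4]
  · -- all edges are unbalanced: orient towards the heavy side and take a sink
    have htot : ∀ a b : ι, T.Adj a b → light hT D a b ∨ light hT D b a := by
      intro a b hab
      by_contra hcon
      push_neg at hcon
      exact hbal ⟨a, b, hab, hcon.1, hcon.2⟩
    obtain ⟨t, hsink⟩ := exists_sink hT D htot
    have hnbradj : ∀ s ∈ T.neighborFinset t, T.Adj s t := by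
      intro s hs
      exact ((SimpleGraph.mem_neighborFinset _ _ _).1 hs).symm
    have hcardsum : (Finset.univ \ D.bag t).card
        = ∑ s ∈ T.neighborFinset t, (PP hT D s t).card := by
      rw [sdiff_bag_eq_biUnion hT D t]
      exact Finset.card_biUnion (fun x hx y hy hxy =>
        PP_disjoint hT D (hnbradj x hx) (hnbradj y hy) hxy)
    by_cases hall : ∀ s ∈ T.neighborFinset t,
        3 * (PP hT D s t).card ≤ 2 * (Finset.univ \ D.bag t).card
    · -- all pieces small: group them
      obtain ⟨u, husub, hlo, hhi⟩ := group_lemma (T.neighborFinset t)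
        (fun s => (PP hT D s t).card)
        (by intro a ha; rw [← hcardsum]; exact hall a ha)
      rw [← hcardsum] at hlo hhi
      have hAcard : (u.biUnion (fun s => PP hT D s t)).card = ∑ s ∈ u, (PP hT D s t).card :=
        Finset.card_biUnion (fun x hx y hy hxy =>
          PP_disjoint hT D (hnbradj x (husub hx)) (hnbradj y (husub hy)) hxy)
      have hunion : (u.biUnion (fun s => PP hT D s t))
          ∪ ((T.neighborFinset t \ u).biUnion (fun s => PP hT D s t))
          = Finset.univ \ D.bag t := by
        rw [sdiff_bag_eq_biUnion hT D t]
        ext v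
        simp only [Finset.mem_union, Finset.mem_biUnion, Finset.mem_sdiff]
        constructor
        · rintro (⟨x, hx, hvx⟩ | ⟨x, hx, hvx⟩)
          · exact ⟨x, husub hx, hvx⟩
          · exact ⟨x, hx.1, hvx⟩
        · rintro ⟨x, hx, hvx⟩
          by_cases hxu : x ∈ u
          · exact Or.inl ⟨x, hxu, hvx⟩
          · exact Or.inr ⟨x, ⟨hx, hxu⟩, hvx⟩
      have hdisj : Disjoint (u.biUnion (fun s => PP hT D s t))
          ((T.neighborFinset t \ u).biUnion (fun s => PP hT D s t)) := by
        rw [Finset.disjoint_left]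
        intro v hv hv'
        simp only [Finset.mem_biUnion] at hv hv'
        obtain ⟨x, hx, hvx⟩ := hv
        obtain ⟨y, hy, hvy⟩ := hv'
        have hxy : x ≠ y := fun h => (Finset.mem_sdiff.1 hy).2 (h ▸ hx)
        exact Finset.disjoint_left.1
          (PP_disjoint hT D (hnbradj x (husub hx)) (hnbradj y (Finset.mem_sdiff.1 hy).1) hxy)
          hvx hvy
      have hadjAB : ∀ a ∈ u.biUnion (fun s => PP hT D s t),
          ∀ b ∈ (T.neighborFinset t \ u).biUnion (fun s => PP hT D s t), ¬ G.Adj a b := by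
        intro a ha b hb
        simp only [Finset.mem_biUnion] at ha hb
        obtain ⟨x, hx, hax⟩ := ha
        obtain ⟨y, hy, hby⟩ := hb
        have hxy : x ≠ y := fun h => (Finset.mem_sdiff.1 hy).2 (h ▸ hx)
        exact no_piece_adj hT D (hnbradj x (husub hx)) (hnbradj y (Finset.mem_sdiff.1 hy).1)
          hxy hax hby
      have hcard : (Finset.univ \ D.bag t).card
          = (u.biUnion (fun s => PP hT D s t)).card
            + ((T.neighborFinset t \ u).biUnion (fun s => PP hT D s t)).card := by
        rw [← hunion, Finset.card_union_of_disjoint hdisj]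
      have hx1 : (u.biUnion (fun s => PP hT D s t)).card
            + ((T.neighborFinset t \ u).biUnion (fun s => PP hT D s t)).card
          ≤ 3 * (u.biUnion (fun s => PP hT D s t)).card := by
        rw [hAcard]; omega
      have hx2 : (u.biUnion (fun s => PP hT D s t)).card
            + ((T.neighborFinset t \ u).biUnion (fun s => PP hT D s t)).card
          ≤ 3 * ((T.neighborFinset t \ u).biUnion (fun s => PP hT D s t)).card := by
        rw [hAcard] at hcard ⊢
        omega
      obtain ⟨r1, r2, r3, r4⟩ := rat_balance hx1 hx2
      refine ⟨D.bag t, _, _, hbag t, hunion, hdisj, hadjAB, ?_, ?_, ?_, ?_⟩ <;> rw [hcard]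
      exacts [r1, r2, r3, r4]
    · -- one piece is too heavy: repair by moving surplus bag vertices into the separator
      push_neg at hall
      obtain ⟨s₀, hs₀nbr, hbad⟩ := hall
      have hadj : T.Adj s₀ t := hnbradj s₀ hs₀nbr
      have hlight : light hT D s₀ t := hsink s₀ hadj
      dsimp [light] at hlight
      have hXjbag : VS hT D s₀ t ∩ VS hT D t s₀ ⊆ D.bag t := by
        intro v hv
        rw [Finset.mem_inter] at hv
        exact (VS_inter_subset hT D hadj hv.1 hv.2).2
      have hpart : Finset.univ \ (VS hT D s₀ t ∩ VS hT D t s₀)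
          = PP hT D s₀ t ∪ PP hT D t s₀ := by
        ext v
        simp only [Finset.mem_union, Finset.mem_sdiff, Finset.mem_univ, true_and,
          Finset.mem_inter, PP]
        have := VS_total hT D hadj v
        tauto
      have hdisjPQ : Disjoint (PP hT D s₀ t) (PP hT D t s₀) := by
        rw [Finset.disjoint_left]
        intro v hv hv'
        rw [PP, Finset.mem_sdiff] at hv hv'
        exact hv.2 hv'.1
      -- numbers
      have hXu : (VS hT D s₀ t ∩ VS hT D t s₀).card ≤ (D.bag t).card :=
        Finset.card_le_card hXjbag
      have hbagu : (D.bag t).card ≤ (Finset.univ : Finset V).card := Finset.card_le_card (Finset.subset_univ _)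
      have hXju : (VS hT D s₀ t ∩ VS hT D t s₀).card ≤ (Finset.univ : Finset V).card :=
        le_trans hXu hbagu
      have hc1 : (PP hT D s₀ t).card + (PP hT D t s₀).card
          = (Finset.univ : Finset V).card - (VS hT D s₀ t ∩ VS hT D t s₀).card := by
        rw [← Finset.card_union_of_disjoint hdisjPQ, ← hpart,
          Finset.card_sdiff_of_subset (Finset.subset_univ _)]
      have hnt : (Finset.univ \ D.bag t).card = (Finset.univ : Finset V).card - (D.bag t).card :=
        Finset.card_sdiff_of_subset (Finset.subset_univ _)
      have hF : (D.bag t \ (VS hT D s₀ t ∩ VS hT D t s₀)).card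
          = (D.bag t).card - (VS hT D s₀ t ∩ VS hT D t s₀).card :=
        Finset.card_sdiff_of_subset hXjbag
      have hp0nt : (PP hT D s₀ t).card ≤ (Finset.univ \ D.bag t).card := by
        refine Finset.card_le_card ?_
        rw [PP_eq_sdiff_bag hT D hadj]
        intro v hv
        rw [Finset.mem_sdiff] at hv ⊢
        exact ⟨Finset.mem_univ v, hv.2⟩
      have hFsub : D.bag t \ (VS hT D s₀ t ∩ VS hT D t s₀) ⊆ PP hT D t s₀ := by
        intro v hv
        rw [Finset.mem_sdiff] at hv
        have h1 : v ∈ VS hT D t s₀ := (mem_VS hT D).2 ⟨t, side_self hT t s₀, hv.1⟩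
        rw [PP, Finset.mem_sdiff]
        exact ⟨h1, fun h2 => hv.2 (Finset.mem_inter.2 ⟨h2, h1⟩)⟩
      -- choose the amount to move
      set p₀ := (PP hT D s₀ t).card with hp₀
      set q := (PP hT D t s₀).card with hq
      set b := max ((Finset.univ \ D.bag t).card - p₀) ((p₀ + 1) / 2) with hbdef
      have hb3 : b = (Finset.univ \ D.bag t).card - p₀ ∨ b = (p₀ + 1) / 2 :=
        max_choice _ _
      have hb1 : (Finset.univ \ D.bag t).card - p₀ ≤ b := le_max_left _ _
      have hb2 : (p₀ + 1) / 2 ≤ b := le_max_right _ _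
      have hzle : q - b ≤ (D.bag t \ (VS hT D s₀ t ∩ VS hT D t s₀)).card := by omega
      obtain ⟨Z, hZF, hZcard⟩ := Finset.exists_subset_card_eq hzle
      have hZPQ : Z ⊆ PP hT D t s₀ := hZF.trans hFsub
      have hdisjXZ : Disjoint (VS hT D s₀ t ∩ VS hT D t s₀) Z := by
        rw [Finset.disjoint_right]
        intro v hv
        exact (Finset.mem_sdiff.1 (hZF hv)).2
      have hXcard : ((VS hT D s₀ t ∩ VS hT D t s₀) ∪ Z).card
          = (VS hT D s₀ t ∩ VS hT D t s₀).card + (q - b) := by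
        rw [Finset.card_union_of_disjoint hdisjXZ, hZcard]
      have hZle2 : Z.card ≤ (D.bag t \ (VS hT D s₀ t ∩ VS hT D t s₀)).card :=
        Finset.card_le_card hZF
      have hXk : ((VS hT D s₀ t ∩ VS hT D t s₀) ∪ Z).card ≤ k + 1 := by
        have := hbag t
        omega
      have hBcard : (PP hT D t s₀ \ Z).card = q - (q - b) := by
        rw [Finset.card_sdiff_of_subset hZPQ, hZcard]
      have hunion : PP hT D s₀ t ∪ (PP hT D t s₀ \ Z)
          = Finset.univ \ ((VS hT D s₀ t ∩ VS hT D t s₀) ∪ Z) := by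
        ext v
        simp only [Finset.mem_union, Finset.mem_sdiff, Finset.mem_univ, true_and,
          Finset.mem_inter, PP]
        have h1 := VS_total hT D hadj v
        have h2 : v ∈ Z → v ∈ VS hT D t s₀ ∧ v ∉ VS hT D s₀ t := by
          intro hz
          have := hZPQ hz
          rwa [PP, Finset.mem_sdiff] at this
        tauto
      have hdisjAB : Disjoint (PP hT D s₀ t) (PP hT D t s₀ \ Z) :=
        hdisjPQ.mono_right (Finset.sdiff_subset)
      have hadjAB : ∀ a ∈ PP hT D s₀ t, ∀ c ∈ PP hT D t s₀ \ Z, ¬ G.Adj a c := by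
        intro a ha c hc
        have hc' := (Finset.mem_sdiff.1 hc).1
        rw [PP, Finset.mem_sdiff] at ha hc'
        exact no_cross_adj hT D hadj ha.1 ha.2 hc'.1 hc'.2
      have hcard : (Finset.univ \ ((VS hT D s₀ t ∩ VS hT D t s₀) ∪ Z)).card
          = (PP hT D s₀ t).card + (PP hT D t s₀ \ Z).card := by
        rw [← hunion, Finset.card_union_of_disjoint hdisjAB]
      have hx1 : (PP hT D s₀ t).card + (PP hT D t s₀ \ Z).card
          ≤ 3 * (PP hT D s₀ t).card := by
        rw [hBcard, ← hp₀]
        omega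
      have hx2 : (PP hT D s₀ t).card + (PP hT D t s₀ \ Z).card
          ≤ 3 * (PP hT D t s₀ \ Z).card := by
        rw [hBcard, ← hp₀]
        omega
      obtain ⟨r1, r2, r3, r4⟩ := rat_balance hx1 hx2
      refine ⟨(VS hT D s₀ t ∩ VS hT D t s₀) ∪ Z, PP hT D s₀ t, PP hT D t s₀ \ Z,
        hXk, hunion, hdisjAB, hadjAB, ?_, ?_, ?_, ?_⟩ <;> rw [hcard]
      exacts [r1, r2, r3, r4]
end

section
/- Let n and k be positive integers with k < n/2 and n ≥ 8·(2k+2)². Then the generalized Petersen graph G_{n,k} contains a bramble of order at least 2k+2; consequently tw(G_{n,k}) ≥ 2k+1. -/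
/-- The generalized Petersen graph `G_{n,k}` on vertex set `{v_1,…,v_n} ⊕ {u_1,…,u_n}`
(`Sum.inl i` is the outer vertex `v_i`, `Sum.inr i` the inner vertex `u_i`), with edges
`v_i v_{i+1}`, `v_i u_i` and `u_i u_{i+k}`, indices read modulo `n`. -/
def genPetersen (n k : ℕ) : SimpleGraph (Fin n ⊕ Fin n) :=
  SimpleGraph.fromRel fun a b =>
    match a, b with
    | Sum.inl i, Sum.inl j => (j : ℕ) = ((i : ℕ) + 1) % n
    | Sum.inl i, Sum.inr j => j = i
    | Sum.inr i, Sum.inr j => (j : ℕ) = ((i : ℕ) + k) % n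
    | _, _ => False

/-- A bramble of `G`: a family of nonempty connected vertex sets of `G` that pairwise
touch (share a vertex or are joined by an edge). -/
def IsBramble {V : Type*} (G : SimpleGraph V) (ℬ : Set (Set V)) : Prop :=
  (∀ B ∈ ℬ, B.Nonempty ∧ (G.induce B).Connected) ∧
  ∀ B₁ ∈ ℬ, ∀ B₂ ∈ ℬ,
    (B₁ ∩ B₂).Nonempty ∨ ∃ u ∈ B₁, ∃ v ∈ B₂, G.Adj u v


open SimpleGraph Set

namespace BrAux

variable {V : Type*} {G : SimpleGraph V}

/-- Connectivity of a set via walks staying inside the set. -/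
def ConnOn (G : SimpleGraph V) (s : Set V) : Prop :=
  ∀ x ∈ s, ∀ y ∈ s, ∃ w : G.Walk x y, ∀ z ∈ w.support, z ∈ s

lemma reachable_induce_of_walk {s : Set V} :
    ∀ {x y : V} (w : G.Walk x y) (hw : ∀ z ∈ w.support, z ∈ s),
    (G.induce s).Reachable ⟨x, hw x w.start_mem_support⟩ ⟨y, hw y w.end_mem_support⟩ := by
  intro x y w
  induction w with
  | nil => intro hw; exact Reachable.refl _
  | @cons a b c h p ih =>
      intro hw
      have hw' : ∀ z ∈ p.support, z ∈ s := fun z hz => hw z (by simp [hz])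
      have h1 : (G.induce s).Adj ⟨a, hw a (Walk.start_mem_support _)⟩
          ⟨b, hw' b (Walk.start_mem_support _)⟩ := by
        simpa using h
      exact (h1.reachable).trans (ih hw')

lemma connOn_induce_connected {s : Set V} (hne : s.Nonempty) (h : ConnOn G s) :
    (G.induce s).Connected := by
  haveI : Nonempty s := ⟨⟨hne.choose, hne.choose_spec⟩⟩
  refine ⟨?_⟩
  rintro ⟨x, hx⟩ ⟨y, hy⟩
  obtain ⟨w, hw⟩ := h x hx y hy
  exact reachable_induce_of_walk w hw

lemma induce_connected_connOn {s : Set V} (h : (G.induce s).Connected) : ConnOn G s := by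
  intro x hx y hy
  obtain ⟨p⟩ := h.preconnected ⟨x, hx⟩ ⟨y, hy⟩
  refine ⟨p.map (SimpleGraph.Embedding.induce s).toHom, fun z hz => ?_⟩
  erw [Walk.support_map, List.mem_map] at hz
  obtain ⟨⟨z', hz'⟩, _, rfl⟩ := hz
  exact hz'

lemma reachset_connOn (G : SimpleGraph V) (S : Set V) (x0 : V) :
    ConnOn G {y | ∃ w : G.Walk x0 y, ∀ z ∈ w.support, z ∉ S} := by
  classical
  rintro x ⟨wx, hwx⟩ y ⟨wy, hwy⟩
  refine ⟨wx.reverse.append wy, fun z hz => ?_⟩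
  rw [Walk.mem_support_append_iff] at hz
  rcases hz with hz | hz
  · rw [Walk.support_reverse, List.mem_reverse] at hz
    exact ⟨wx.takeUntil z hz, fun z' hz' => hwx z' (wx.support_takeUntil_subset hz hz')⟩
  · exact ⟨wy.takeUntil z hz, fun z' hz' => hwy z' (wy.support_takeUntil_subset hz hz')⟩

lemma isPath_append {a m b : V} {w1 : G.Walk a m} {w2 : G.Walk m b}
    (h1 : w1.IsPath) (h2 : w2.IsPath)
    (h : ∀ z, z ∈ w1.support → z ∈ w2.support → z = m) : (w1.append w2).IsPath := by
  rw [Walk.isPath_def, Walk.support_append]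
  have h2n := h2.support_nodup
  rw [w2.support_eq_cons] at h2n
  refine List.Nodup.append h1.support_nodup (List.nodup_cons.mp h2n).2 ?_
  intro z hz1 hz2
  have hz2' : z ∈ w2.support := by
    rw [w2.support_eq_cons]; exact List.mem_cons_of_mem _ hz2
  have hzm : z = m := h z hz1 hz2'
  subst hzm
  exact (List.nodup_cons.mp h2n).1 hz2

/-- first vertex of a walk lying in `A`. -/
lemma exists_first {x y : V} (w : G.Walk x y) (A : Set V) (hy : y ∈ A) :
    ∃ m ∈ A, ∃ w1 : G.Walk x m, (∀ z ∈ w1.support, z ∈ A → z = m) ∧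
      (∀ z ∈ w1.support, z ∈ w.support) := by
  induction w with
  | @nil a =>
      exact ⟨a, hy, Walk.nil, by simp, by simp⟩
  | @cons a b c h p ih =>
      by_cases hx : a ∈ A
      · exact ⟨a, hx, Walk.nil, by simp, by simp⟩
      · obtain ⟨m, hm, w1, hfirst, hsub⟩ := ih hy
        refine ⟨m, hm, Walk.cons h w1, ?_, ?_⟩
        · intro z hz hzA
          rw [Walk.support_cons, List.mem_cons] at hz
          rcases hz with rfl | hz
          · exact absurd hzA hx
          · exact hfirst z hz hzA
        · intro z hz
          rw [Walk.support_cons, List.mem_cons] at hz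
          rcases hz with rfl | hz
          · exact Walk.start_mem_support _
          · rw [Walk.support_cons]
            exact List.mem_cons_of_mem _ (hsub z hz)

end BrAux
section TreePart
open SimpleGraph Set
namespace BrAux

variable {ι : Type*} {T : SimpleGraph ι}

lemma path_support_eq (hT : T.IsAcyclic) {x y : ι} (p q : T.Walk x y)
    (hp : p.IsPath) (hq : q.IsPath) : p.support = q.support := by
  have : p = q := Subtype.mk_eq_mk.mp (hT.path_unique ⟨p, hp⟩ ⟨q, hq⟩)
  rw [this]

lemma connOn_inter (hT : T.IsAcyclic) {s t : Set ι} (hs : ConnOn T s) (ht : ConnOn T t) :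
    ConnOn T (s ∩ t) := by
  classical
  intro x hx y hy
  obtain ⟨w1, h1⟩ := hs x hx.1 y hy.1
  obtain ⟨w2, h2⟩ := ht x hx.2 y hy.2
  refine ⟨w1.bypass, fun z hz => ?_⟩
  have hzs : z ∈ s := h1 z (w1.support_bypass_subset hz)
  have heq : w1.bypass.support = w2.bypass.support :=
    path_support_eq hT _ _ w1.bypass_isPath w2.bypass_isPath
  have hzt : z ∈ t := h2 z (w2.support_bypass_subset (heq ▸ hz))
  exact ⟨hzs, hzt⟩

lemma median (hT : T.IsAcyclic) {s1 s2 s3 : Set ι}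
    (h1 : ConnOn T s1) (h2 : ConnOn T s2) (h3 : ConnOn T s3)
    {a b c : ι} (ha : a ∈ s1 ∩ s2) (hb : b ∈ s1 ∩ s3) (hc : c ∈ s2 ∩ s3) :
    (s1 ∩ (s2 ∩ s3)).Nonempty := by
  classical
  obtain ⟨r, hr⟩ := h2 a ha.2 c hc.1
  obtain ⟨q, hq⟩ := h3 b hb.2 c hc.2
  obtain ⟨m, hmq, w1, hfirst, hsub1⟩ :=
    exists_first r {z | z ∈ q.support} q.end_mem_support
  set p1 := w1.bypass with hp1
  set w2 := (q.takeUntil m hmq).reverse with hw2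
  set p2 := w2.bypass with hp2def
  have hp2sub : ∀ z ∈ p2.support, z ∈ q.support := by
    intro z hz
    have h' := w2.support_bypass_subset hz
    rw [hw2, Walk.support_reverse, List.mem_reverse] at h'
    exact q.support_takeUntil_subset hmq h'
  have happ : (p1.append p2).IsPath := by
    refine isPath_append w1.bypass_isPath w2.bypass_isPath (fun z hz1 hz2 => ?_)
    exact hfirst z (w1.support_bypass_subset hz1) (hp2sub z hz2)
  obtain ⟨pp, hpp⟩ := h1 a ha.1 b hb.1
  have heq : (p1.append p2).support = pp.bypass.support :=
    path_support_eq hT _ _ happ pp.bypass_isPath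
  have hmmem : m ∈ (p1.append p2).support := by
    rw [Walk.mem_support_append_iff]
    exact Or.inl p1.end_mem_support
  have hm_s1 : m ∈ s1 := hpp m (pp.support_bypass_subset (heq ▸ hmmem))
  have hm_s2 : m ∈ s2 := hr m (hsub1 m w1.end_mem_support)
  have hm_s3 : m ∈ s3 := hq m hmq
  exact ⟨m, hm_s1, hm_s2, hm_s3⟩

lemma helly (hT : T.IsTree) :
    ∀ N : ℕ, ∀ F : Set (Set ι), F.Finite → F.ncard ≤ N → F.Nonempty →
    (∀ s ∈ F, ConnOn T s) → (∀ s ∈ F, ∀ t ∈ F, (s ∩ t).Nonempty) →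
    ∃ i, ∀ s ∈ F, i ∈ s := by
  intro N
  induction N with
  | zero =>
      intro F hfin hcard hne _ _
      exact absurd hcard (by
        have := (Set.ncard_pos hfin).mpr hne; omega)
  | succ N ih =>
      intro F hfin hcard hne hconn hpair
      by_cases hbig : ∃ s ∈ F, ∃ t ∈ F, s ≠ t
      · obtain ⟨s, hs, t, ht, hst⟩ := hbig
        set F' : Set (Set ι) := insert (s ∩ t) (F \ {s, t}) with hF'
        have hfin' : F'.Finite := ((hfin.diff)).insert _
        have hsub : {s, t} ⊆ F := by
          rintro u (rfl | rfl); exact hs; simpa using ht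
        have hcard' : F'.ncard ≤ N := by
          have h1 : (F \ {s, t}).ncard = F.ncard - ({s, t} : Set (Set ι)).ncard :=
            Set.ncard_diff hsub ((Set.finite_singleton _).insert _)
          have h2 : ({s, t} : Set (Set ι)).ncard = 2 := Set.ncard_pair hst
          have h3 : F'.ncard ≤ (F \ {s, t}).ncard + 1 := Set.ncard_insert_le _ _
          have h4 : 2 ≤ F.ncard := by
            rw [← h2]; exact Set.ncard_le_ncard hsub hfin
          omega
        have hne' : F'.Nonempty := ⟨_, Set.mem_insert _ _⟩
        have hconn' : ∀ u ∈ F', ConnOn T u := by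
          rintro u (rfl | hu)
          · exact connOn_inter hT.IsAcyclic (hconn s hs) (hconn t ht)
          · exact hconn u hu.1
        have hpair' : ∀ u ∈ F', ∀ v ∈ F', (u ∩ v).Nonempty := by
          have key : ∀ v ∈ F, (v ∩ (s ∩ t)).Nonempty := by
            intro v hv
            obtain ⟨a, ha⟩ := hpair v hv s hs
            obtain ⟨b, hb⟩ := hpair v hv t ht
            obtain ⟨c, hc⟩ := hpair s hs t ht
            exact median hT.IsAcyclic (hconn v hv) (hconn s hs) (hconn t ht) ha hb hc
          rintro u (rfl | hu) v (rfl | hv)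
          · obtain ⟨z, hz1, hz2⟩ := hpair s hs t ht
            exact ⟨z, ⟨hz1, hz2⟩, ⟨hz1, hz2⟩⟩
          · obtain ⟨z, hz⟩ := key v hv.1
            exact ⟨z, hz.2, hz.1⟩
          · exact key u hu.1
          · exact hpair u hu.1 v hv.1
        obtain ⟨i, hi⟩ := ih F' hfin' hcard' hne' hconn' hpair'
        have hist : i ∈ s ∩ t := hi _ (Set.mem_insert _ _)
        refine ⟨i, fun v hv => ?_⟩
        by_cases hvs : v = s
        · exact hvs ▸ hist.1
        by_cases hvt : v = t
        · exact hvt ▸ hist.2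
        · exact hi v (Set.mem_insert_of_mem _ ⟨hv, by simp [hvs, hvt]⟩)
      · push_neg at hbig
        obtain ⟨s, hs⟩ := hne
        obtain ⟨i, hi⟩ := hpair s hs s hs
        refine ⟨i, fun v hv => ?_⟩
        have : s = v := hbig s hs v hv
        exact this ▸ hi.1

end BrAux
end TreePart
section PartB
open SimpleGraph Set
namespace BrAux

lemma bramble_bag {V : Type*} {ι : Type} [Fintype ι] {G : SimpleGraph V} {T : SimpleGraph ι}
    (hT : T.IsTree) (D : TreeDecomp G T) {ℬ : Set (Set V)} (hb : IsBramble G ℬ)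
    (hne : ℬ.Nonempty) :
    ∃ i, ∀ B ∈ ℬ, ((D.bag i : Set V) ∩ B).Nonempty := by
  classical
  set J : Set V → Set ι := fun B => {i | ∃ x ∈ B, x ∈ D.bag i} with hJ
  have hwalkJ : ∀ (B : Set V), B ∈ ℬ → ∀ {x y : V} (w : G.Walk x y),
      (∀ z ∈ w.support, z ∈ B) → ∀ i, x ∈ D.bag i → ∀ j, y ∈ D.bag j →
      ∃ tw : T.Walk i j, ∀ z ∈ tw.support, z ∈ J B := by
    intro B hB x y w
    induction w with
    | @nil a =>
        intro hsup i hi j hj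
        have hconn : ConnOn T {m | a ∈ D.bag m} := induce_connected_connOn (D.subtree a)
        obtain ⟨tw, htw⟩ := hconn i hi j hj
        exact ⟨tw, fun z hz => ⟨a, hsup a (Walk.start_mem_support _), htw z hz⟩⟩
    | @cons a b c h p ih =>
        intro hsup i hi j hj
        obtain ⟨m, hma, hmb⟩ := D.edgeCover a b h
        have hconn : ConnOn T {m | a ∈ D.bag m} := induce_connected_connOn (D.subtree a)
        obtain ⟨tw1, htw1⟩ := hconn i hi m hma
        have hsup' : ∀ z ∈ p.support, z ∈ B := fun z hz => hsup z (by simp [hz])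
        obtain ⟨tw2, htw2⟩ := ih hsup' m hmb j hj
        refine ⟨tw1.append tw2, fun z hz => ?_⟩
        rw [Walk.mem_support_append_iff] at hz
        rcases hz with hz | hz
        · exact ⟨a, hsup a (Walk.start_mem_support _), htw1 z hz⟩
        · exact htw2 z hz
  have hconnJ : ∀ B ∈ ℬ, ConnOn T (J B) := by
    rintro B hB i ⟨x, hxB, hxbag⟩ j ⟨y, hyB, hybag⟩
    have hBconn : ConnOn G B := induce_connected_connOn (hb.1 B hB).2
    obtain ⟨w, hw⟩ := hBconn x hxB y hyB
    exact hwalkJ B hB w hw i hxbag j hybag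
  have hpairJ : ∀ B₁ ∈ ℬ, ∀ B₂ ∈ ℬ, (J B₁ ∩ J B₂).Nonempty := by
    intro B₁ h₁ B₂ h₂
    rcases hb.2 B₁ h₁ B₂ h₂ with ⟨x, hx1, hx2⟩ | ⟨u, hu, v, hv, huv⟩
    · obtain ⟨i, hi⟩ := D.cover x
      exact ⟨i, ⟨x, hx1, hi⟩, ⟨x, hx2, hi⟩⟩
    · obtain ⟨i, hiu, hiv⟩ := D.edgeCover u v huv
      exact ⟨i, ⟨u, hu, hiu⟩, ⟨v, hv, hiv⟩⟩
  set F : Set (Set ι) := J '' ℬ with hF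
  have hfinF : F.Finite := Set.toFinite _
  obtain ⟨i, hi⟩ := helly hT F.ncard F hfinF le_rfl (hne.image J)
    (by rintro s ⟨B, hB, rfl⟩; exact hconnJ B hB)
    (by rintro s ⟨B₁, h₁, rfl⟩ t ⟨B₂, h₂, rfl⟩; exact hpairJ B₁ h₁ B₂ h₂)
  refine ⟨i, fun B hB => ?_⟩
  obtain ⟨x, hxB, hxbag⟩ := hi (J B) ⟨B, hB, rfl⟩
  exact ⟨x, hxbag, hxB⟩

lemma treewidth_lower {V : Type*} [Fintype V] (G : SimpleGraph V) (c : ℕ)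
    {ℬ : Set (Set V)} (hb : IsBramble G ℬ)
    (hhit : ∀ S : Set V, (∀ B ∈ ℬ, (S ∩ B).Nonempty) → c ≤ S.ncard) :
    c - 1 ≤ treewidth G := by
  classical
  rcases Nat.eq_zero_or_pos c with rfl | hc
  · simp
  have hne : ℬ.Nonempty := by
    rw [Set.nonempty_iff_ne_empty]
    intro h
    have := hhit ∅ (by intro B hB; rw [h] at hB; exact absurd hB (Set.notMem_empty _))
    simp [Set.ncard_empty] at this
    omega
  have hmem : ∃ w, w ∈ { w : ℕ | ∃ (ι : Type) (_ : Fintype ι) (T : SimpleGraph ι),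
      T.IsTree ∧ ∃ D : TreeDecomp G T,
        (Finset.univ.sup fun i => (D.bag i).card) - 1 = w } := by
    refine ⟨_, Unit, inferInstance, ⊥,
      ⟨Connected.mk (fun x y => (Subsingleton.elim x y) ▸ Reachable.refl x),
        isAcyclic_bot⟩, ⟨⟨fun _ => Finset.univ,
        fun v => ⟨(), Finset.mem_univ v⟩,
        fun u v _ => ⟨(), Finset.mem_univ u, Finset.mem_univ v⟩,
        fun v => ?_⟩, rfl⟩⟩
    haveI : Nonempty ({i : Unit | v ∈ Finset.univ} : Set Unit) := ⟨⟨(), Finset.mem_univ v⟩⟩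
    exact Connected.mk (fun x y => (Subsingleton.elim x y) ▸ Reachable.refl x)
  rw [treewidth]
  apply le_csInf ⟨hmem.choose, hmem.choose_spec⟩
  rintro w ⟨ι, instι, T, hT, D, rfl⟩
  obtain ⟨i, hi⟩ := bramble_bag hT D hb hne
  have hcard : c ≤ (D.bag i).card := by
    have := hhit (D.bag i : Set V) (hi)
    rwa [Set.ncard_coe_finset] at this
  have hsup : (D.bag i).card ≤ Finset.univ.sup fun i => (D.bag i).card :=
    Finset.le_sup (f := fun i => (D.bag i).card) (Finset.mem_univ i)
  omega

end BrAux
end PartB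
section PartA
open SimpleGraph Set
namespace BrAux

variable {n k : ℕ}

abbrev Vtx (n : ℕ) := Fin n ⊕ Fin n

def idx {n : ℕ} : Vtx n → Fin n := Sum.elim id id

@[simp] lemma idx_inl (i : Fin n) : idx (Sum.inl i) = i := rfl
@[simp] lemma idx_inr (i : Fin n) : idx (Sum.inr i) = i := rfl

def sh (i : Fin n) (o : ℕ) : Fin n := ⟨(i.val + o) % n, Nat.mod_lt _ i.pos⟩

lemma sh_val (i : Fin n) (o : ℕ) : (sh i o).val = (i.val + o) % n := rfl

lemma sh_zero (i : Fin n) : sh i 0 = i := by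
  apply Fin.ext; simp [sh_val, Nat.mod_eq_of_lt i.isLt]

lemma sh_sh (i : Fin n) (a b : ℕ) : sh (sh i a) b = sh i (a + b) := by
  apply Fin.ext
  show ((i.val + a) % n + b) % n = (i.val + (a + b)) % n
  rw [Nat.mod_add_mod, Nat.add_assoc]

lemma sh_n (i : Fin n) : sh i n = i := by
  apply Fin.ext
  show (i.val + n) % n = i.val
  rw [Nat.add_mod_right, Nat.mod_eq_of_lt i.isLt]

lemma sh_cancel {i : Fin n} {o o' : ℕ} (ho : o < n) (ho' : o' < n) (h : sh i o = sh i o') :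
    o = o' := by
  have h' : (i.val + o) % n = (i.val + o') % n := congrArg Fin.val h
  have h2 : o ≡ o' [MOD n] := Nat.ModEq.add_left_cancel' i.val h'
  rwa [Nat.ModEq, Nat.mod_eq_of_lt ho, Nat.mod_eq_of_lt ho'] at h2

def dist0 (i y : Fin n) : ℕ := (y.val + n - i.val) % n

lemma dist0_lt (i y : Fin n) : dist0 i y < n := Nat.mod_lt _ i.pos

lemma sh_dist0 (i y : Fin n) : sh i (dist0 i y) = y := by
  apply Fin.ext
  show (i.val + (y.val + n - i.val) % n) % n = y.val
  have hi := i.isLt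
  rw [Nat.add_mod_mod]
  have h1 : i.val + (y.val + n - i.val) = y.val + n := by omega
  rw [h1, Nat.add_mod_right, Nat.mod_eq_of_lt y.isLt]

lemma dist0_eq_zero {i y : Fin n} (h : dist0 i y = 0) : y = i := by
  have h2 := sh_dist0 i y; rw [h, sh_zero] at h2; exact h2.symm

lemma adj_outer (h2 : 2 ≤ n) (i : Fin n) :
    (genPetersen n k).Adj (Sum.inl i) (Sum.inl (sh i 1)) := by
  rw [genPetersen, SimpleGraph.fromRel_adj]
  refine ⟨?_, Or.inl rfl⟩
  intro h
  simp only [Sum.inl.injEq] at h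
  have h' : i.val = (i.val + 1) % n := congrArg Fin.val h
  have hi := i.isLt
  rcases Nat.lt_or_ge (i.val + 1) n with hlt | hge
  · rw [Nat.mod_eq_of_lt hlt] at h'; omega
  · have : i.val + 1 = n := by omega
    rw [this, Nat.mod_self] at h'; omega

lemma adj_spoke (i : Fin n) :
    (genPetersen n k).Adj (Sum.inl i) (Sum.inr i) := by
  rw [genPetersen, SimpleGraph.fromRel_adj]
  exact ⟨by simp, Or.inl rfl⟩

lemma adj_inner (hk1 : 1 ≤ k) (hkn : k < n) (i : Fin n) :
    (genPetersen n k).Adj (Sum.inr i) (Sum.inr (sh i k)) := by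
  rw [genPetersen, SimpleGraph.fromRel_adj]
  refine ⟨?_, Or.inl rfl⟩
  intro h
  simp only [Sum.inr.injEq] at h
  have h2 : sh i 0 = sh i k := by rw [sh_zero]; exact h
  have := sh_cancel (by omega) hkn h2
  omega

lemma walk_outer (h2 : 2 ≤ n) (S : Set (Vtx n)) (i : Fin n) :
    ∀ g : ℕ, (∀ o ≤ g, Sum.inl (sh i o) ∉ S) →
    ∃ w : (genPetersen n k).Walk (Sum.inl i) (Sum.inl (sh i g)),
      ∀ z ∈ w.support, z ∉ S := by
  intro g
  induction g with
  | zero =>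
      intro h
      refine ⟨Walk.nil.copy rfl (by rw [sh_zero]), fun z hz => ?_⟩
      rw [Walk.support_copy, Walk.support_nil] at hz
      simp only [List.mem_singleton] at hz; subst hz
      have h0 := h 0 le_rfl; rwa [sh_zero] at h0
  | succ g ih =>
      intro h
      obtain ⟨w, hw⟩ := ih (fun o ho => h o (by omega))
      refine ⟨(w.concat (adj_outer h2 (sh i g))).copy rfl
        (by rw [sh_sh]), fun z hz => ?_⟩
      rw [Walk.support_copy, Walk.support_concat] at hz
      rw [List.mem_append, List.mem_singleton] at hz
      rcases hz with hz | hz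
      · exact hw z hz
      · subst hz
        have := h (g+1) le_rfl
        rwa [← sh_sh] at this

lemma walk_strand (hk1 : 1 ≤ k) (hkn : k < n) (S : Set (Vtx n)) (i : Fin n) (a : ℕ) :
    ∀ t : ℕ, (∀ s ≤ t, Sum.inr (sh i (a + s * k)) ∉ S) →
    ∃ w : (genPetersen n k).Walk (Sum.inr (sh i a)) (Sum.inr (sh i (a + t * k))),
      ∀ z ∈ w.support, z ∉ S := by
  intro t
  induction t with
  | zero =>
      intro h
      refine ⟨Walk.nil.copy rfl (by norm_num), fun z hz => ?_⟩
      rw [Walk.support_copy, Walk.support_nil] at hz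
      simp only [List.mem_singleton] at hz; subst hz
      have h0 := h 0 le_rfl; simpa using h0
  | succ t ih =>
      intro h
      obtain ⟨w, hw⟩ := ih (fun s hs => h s (by omega))
      refine ⟨(w.concat (adj_inner hk1 hkn (sh i (a + t*k)))).copy rfl
        (by rw [sh_sh]; congr 1; ring_nf), fun z hz => ?_⟩
      rw [Walk.support_copy, Walk.support_concat] at hz
      rw [List.mem_append, List.mem_singleton] at hz
      rcases hz with hz | hz
      · exact hw z hz
      · subst hz
        have hnew := h (t+1) le_rfl
        rw [show a + (t+1)*k = a + t*k + k by ring_nf, ← sh_sh] at hnew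
        exact hnew

end BrAux
end PartA
section PartA2
open SimpleGraph Set
namespace BrAux

variable {n k : ℕ}

lemma cross (hk1 : 1 ≤ k) (hkn : 2 * k < n) (S : Set (Vtx n)) (i : Fin n) (g : ℕ) (hgn : g < n)
    (hmi : ∀ o ≤ k, Sum.inl (sh i o) ∉ S ∧ Sum.inr (sh i o) ∉ S)
    (hmj : ∀ o ≤ k, o ≤ g → Sum.inl (sh i (g - o)) ∉ S ∧ Sum.inr (sh i (g - o)) ∉ S)
    (hcnt : {x : Vtx n | x ∈ S ∧ ∃ o, 0 < o ∧ o < g ∧ idx x = sh i o}.ncard ≤ k) :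
    ∃ w : (genPetersen n k).Walk (Sum.inl i) (Sum.inl (sh i g)), ∀ z ∈ w.support, z ∉ S := by
  classical
  have h2 : 2 ≤ n := by omega
  by_cases houter : ∀ o ≤ g, Sum.inl (sh i o) ∉ S
  · exact walk_outer h2 S i g houter
  push_neg at houter
  obtain ⟨o₀, ho₀g, ho₀S⟩ := houter
  have hofs : ∀ o ≤ g, (Sum.inl (sh i o) ∈ S ∨ Sum.inr (sh i o) ∈ S) →
      k < o ∧ k < g - o := by
    intro o hog hmem
    constructor
    · by_contra hcon; push_neg at hcon
      rcases hmem with hm | hm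
      · exact (hmi o hcon).1 hm
      · exact (hmi o hcon).2 hm
    · by_contra hcon; push_neg at hcon
      have h1 : g - (g - o) = o := by omega
      rcases hmem with hm | hm
      · have := (hmj (g - o) hcon (by omega)).1; rw [h1] at this; exact this hm
      · have := (hmj (g - o) hcon (by omega)).2; rw [h1] at this; exact this hm
  have hg2k : 2 * k < g := by
    have := hofs o₀ ho₀g (Or.inl ho₀S); omega
  have hstr : ∃ a < k, ∀ o ≤ g, o % k = a → Sum.inr (sh i o) ∉ S := by
    by_contra hall
    push_neg at hall
    choose ow how1 how2 how3 using hall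
    set A := {x : Vtx n | x ∈ S ∧ ∃ o, 0 < o ∧ o < g ∧ idx x = sh i o} with hA
    set f : Fin (k+1) → Vtx n := fun t =>
      if h : t.val < k then Sum.inr (sh i (ow t.val h)) else Sum.inl (sh i o₀) with hf
    have hrange : ∀ t, f t ∈ A := by
      intro t
      by_cases h : t.val < k
      · rw [hf]; simp only [dif_pos h]
        have hb := hofs (ow t.val h) (how1 t.val h) (Or.inr (how3 t.val h))
        exact ⟨how3 t.val h, ow t.val h, by omega, by omega, rfl⟩
      · rw [hf]; simp only [dif_neg h]
        have hb := hofs o₀ ho₀g (Or.inl ho₀S)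
        exact ⟨ho₀S, o₀, by omega, by omega, rfl⟩
    have hinj : Function.Injective f := by
      intro t t' heq
      by_cases ht : t.val < k <;> by_cases ht' : t'.val < k
      · rw [hf] at heq; simp only [dif_pos ht, dif_pos ht'] at heq
        rw [Sum.inr.injEq] at heq
        have hoo : ow t.val ht = ow t'.val ht' :=
          sh_cancel (by have := how1 t.val ht; omega)
            (by have := how1 t'.val ht'; omega) heq
        apply Fin.ext
        rw [← how2 t.val ht, ← how2 t'.val ht', hoo]
      · rw [hf] at heq; simp only [dif_pos ht, dif_neg ht'] at heq; exact absurd heq (by simp)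
      · rw [hf] at heq; simp only [dif_neg ht, dif_pos ht'] at heq; exact absurd heq (by simp)
      · apply Fin.ext
        have := t.isLt; have := t'.isLt; omega
    have hge : k + 1 ≤ A.ncard := by
      have hsub : Set.range f ⊆ A := Set.range_subset_iff.mpr hrange
      have h5 : (Set.range f).ncard = k + 1 := by
        rw [← Set.image_univ, Set.ncard_image_of_injective _ hinj, Set.ncard_univ,
          Nat.card_eq_fintype_card, Fintype.card_fin]
      have := Set.ncard_le_ncard hsub (Set.toFinite A)
      omega
    omega
  obtain ⟨a, hak, hclean⟩ := hstr
  have hkpos : 0 < k := hk1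
  have hag : a < g := by omega
  have htk : ((g - a) / k) * k ≤ g - a := Nat.div_mul_le_self _ _
  have hdm : k * ((g - a) / k) + (g - a) % k = g - a := Nat.div_add_mod _ _
  have hmlt : (g - a) % k < k := Nat.mod_lt _ hkpos
  have hcomm : k * ((g - a) / k) = ((g - a) / k) * k := Nat.mul_comm _ _
  set t := (g - a) / k with htdef
  set e := a + t * k with hedef
  have heg : e ≤ g := by omega
  have hge : g - e < k := by omega
  obtain ⟨w1, hw1⟩ := walk_outer (k := k) h2 S i a (fun o ho => (hmi o (by omega)).1)
  obtain ⟨w2, hw2⟩ := walk_strand hk1 (by omega) S i a t (fun s hs => by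
    refine hclean (a + s * k) ?_ ?_
    · have := Nat.mul_le_mul_right k hs
      omega
    · rw [Nat.add_mul_mod_self_right, Nat.mod_eq_of_lt hak])
  obtain ⟨w3, hw3⟩ := walk_outer (k := k) h2 S (sh i e) (g - e) (fun o ho => by
    rw [sh_sh]
    have h1 : g - (g - (e + o)) = e + o := by omega
    have hm := (hmj (g - (e + o)) (by omega) (by omega)).1
    rwa [h1] at hm)
  have hinle : Sum.inl (sh i e) ∉ S := by
    have h1 : g - (g - e) = e := by omega
    have hm := (hmj (g - e) (by omega) (by omega)).1
    rwa [h1] at hm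
  have hinre : Sum.inr (sh i e) ∉ S := by
    have h1 : g - (g - e) = e := by omega
    have hm := (hmj (g - e) (by omega) (by omega)).2
    rwa [h1] at hm
  have hinla : Sum.inl (sh i a) ∉ S := (hmi a (by omega)).1
  have hinra : Sum.inr (sh i a) ∉ S := (hmi a (by omega)).2
  -- assemble
  set w2' : (genPetersen n k).Walk (Sum.inr (sh i a)) (Sum.inr (sh i e)) :=
    w2.copy rfl (by rw [hedef]) with hw2'def
  set w3' : (genPetersen n k).Walk (Sum.inl (sh i e)) (Sum.inl (sh i g)) :=
    w3.copy rfl (by rw [sh_sh, Nat.add_sub_cancel' heg]) with hw3'def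
  refine ⟨w1.append (Walk.cons (adj_spoke (sh i a))
    (w2'.append (Walk.cons (adj_spoke (sh i e)).symm w3'))), fun z hz => ?_⟩
  rw [Walk.mem_support_append_iff] at hz
  rcases hz with hz | hz
  · exact hw1 z hz
  rw [Walk.support_cons, List.mem_cons] at hz
  rcases hz with rfl | hz
  · exact hinla
  rw [Walk.mem_support_append_iff] at hz
  rcases hz with hz | hz
  · rw [hw2'def, Walk.support_copy] at hz
    exact hw2 z hz
  rw [Walk.support_cons, List.mem_cons] at hz
  rcases hz with rfl | hz
  · exact hinre
  · rw [hw3'def, Walk.support_copy] at hz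
    exact hw3 z hz

end BrAux
end PartA2
section PartA3
open SimpleGraph Set
namespace BrAux

variable {n k : ℕ}

def Dset (k : ℕ) (S : Set (Vtx n)) : Set (Fin n) :=
  {i | ∀ x ∈ S, ∀ o ≤ k, idx x ≠ sh i o ∧ idx x ≠ sh i (n - o)}

lemma margin_right {S : Set (Vtx n)} {i : Fin n} (hi : i ∈ Dset k S) :
    ∀ o ≤ k, Sum.inl (sh i o) ∉ S ∧ Sum.inr (sh i o) ∉ S := by
  intro o ho
  exact ⟨fun hmem => (hi _ hmem o ho).1 rfl, fun hmem => (hi _ hmem o ho).1 rfl⟩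

lemma margin_left {S : Set (Vtx n)} {i j : Fin n} (hj : j ∈ Dset k S) {g : ℕ}
    (hkn : k < n) (hij : sh i g = j) :
    ∀ o ≤ k, o ≤ g → Sum.inl (sh i (g - o)) ∉ S ∧ Sum.inr (sh i (g - o)) ∉ S := by
  intro o hok hog
  have key : sh j (n - o) = sh i (g - o) := by
    rw [← hij, sh_sh]
    have h1 : g + (n - o) = (g - o) + n := by omega
    rw [h1, ← sh_sh, sh_n]
  exact ⟨fun hmem => (hj _ hmem o hok).2 (by rw [idx_inl, ← key]),
    fun hmem => (hj _ hmem o hok).2 (by rw [idx_inr, ← key])⟩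

lemma connect (hk1 : 1 ≤ k) (hkn : 2 * k < n) (S : Set (Vtx n)) (hS : S.ncard ≤ 2 * k + 1)
    {i j : Fin n} (hi : i ∈ Dset k S) (hj : j ∈ Dset k S) :
    ∃ w : (genPetersen n k).Walk (Sum.inl i) (Sum.inl j), ∀ z ∈ w.support, z ∉ S := by
  classical
  by_cases hij : i = j
  · subst hij
    refine ⟨Walk.nil, fun z hz => ?_⟩
    simp only [Walk.support_nil, List.mem_singleton] at hz; subst hz
    have h0 := (margin_right hi 0 (by omega)).1
    rwa [sh_zero] at h0
  have hg : sh i (dist0 i j) = j := sh_dist0 i j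
  have hg' : sh j (dist0 j i) = i := sh_dist0 j i
  have hgn : dist0 i j < n := dist0_lt i j
  have hgn' : dist0 j i < n := dist0_lt j i
  have hg0 : 0 < dist0 i j := by
    rcases Nat.eq_zero_or_pos (dist0 i j) with h | h
    · exact absurd (dist0_eq_zero h) (fun hh => hij hh.symm)
    · exact h
  have hg0' : 0 < dist0 j i := by
    rcases Nat.eq_zero_or_pos (dist0 j i) with h | h
    · exact absurd (dist0_eq_zero h) hij
    · exact h
  have hsum : dist0 i j + dist0 j i = n := by
    have h1 : sh i (dist0 i j + dist0 j i) = i := by rw [← sh_sh, hg, hg']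
    have h2 : (i.val + (dist0 i j + dist0 j i)) % n = (i.val + 0) % n := by
      have := congrArg Fin.val h1
      rw [sh_val] at this
      rw [this, Nat.add_zero, Nat.mod_eq_of_lt i.isLt]
    have h3 : (dist0 i j + dist0 j i) ≡ 0 [MOD n] := Nat.ModEq.add_left_cancel' i.val h2
    have h4 : (dist0 i j + dist0 j i) % n = 0 := by
      have h5 : (0 : ℕ) % n = 0 := Nat.zero_mod n
      rw [Nat.ModEq] at h3; rw [h3, h5]
    have h5 : n ∣ (dist0 i j + dist0 j i) := Nat.dvd_of_mod_eq_zero h4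
    have h5' : n ≤ dist0 i j + dist0 j i := Nat.le_of_dvd (by omega) h5
    have h6 : dist0 i j + dist0 j i - n < n := by omega
    have h7 : (dist0 i j + dist0 j i) % n = (dist0 i j + dist0 j i - n) % n :=
      Nat.mod_eq_sub_mod h5'
    rw [h7, Nat.mod_eq_of_lt h6] at h4
    omega
  have hdisj : Disjoint {x : Vtx n | x ∈ S ∧ ∃ o, 0 < o ∧ o < dist0 i j ∧ idx x = sh i o}
      {x : Vtx n | x ∈ S ∧ ∃ o, 0 < o ∧ o < dist0 j i ∧ idx x = sh j o} := by
    rw [Set.disjoint_left]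
    rintro x ⟨hxS, o, ho0, hog, hxo⟩ ⟨_, o', ho0', hog', hxo'⟩
    have he : sh i o = sh i (dist0 i j + o') := by
      rw [← sh_sh, hg, ← hxo, hxo']
    have := sh_cancel (by omega) (by omega) he
    omega
  have hcards : {x : Vtx n | x ∈ S ∧ ∃ o, 0 < o ∧ o < dist0 i j ∧ idx x = sh i o}.ncard
      + {x : Vtx n | x ∈ S ∧ ∃ o, 0 < o ∧ o < dist0 j i ∧ idx x = sh j o}.ncard ≤ 2 * k + 1 := by
    have hsub : {x : Vtx n | x ∈ S ∧ ∃ o, 0 < o ∧ o < dist0 i j ∧ idx x = sh i o}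
        ∪ {x : Vtx n | x ∈ S ∧ ∃ o, 0 < o ∧ o < dist0 j i ∧ idx x = sh j o} ⊆ S := by
      rintro x (⟨h, _⟩ | ⟨h, _⟩) <;> exact h
    have h1 := Set.ncard_union_eq hdisj (Set.toFinite _) (Set.toFinite _)
    have h2 := Set.ncard_le_ncard hsub (Set.toFinite _)
    omega
  rcases le_or_gt {x : Vtx n | x ∈ S ∧ ∃ o, 0 < o ∧ o < dist0 i j ∧ idx x = sh i o}.ncard k
    with hA | hA
  · obtain ⟨w, hw⟩ := cross hk1 hkn S i (dist0 i j) hgn (margin_right hi)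
      (margin_left hj (by omega) hg) hA
    exact ⟨w.copy rfl (by rw [hg]), fun z hz => hw z (by rwa [Walk.support_copy] at hz)⟩
  · obtain ⟨w, hw⟩ := cross hk1 hkn S j (dist0 j i) hgn' (margin_right hj)
      (margin_left hi (by omega) hg') (by omega)
    refine ⟨(w.copy rfl (by rw [hg'])).reverse, fun z hz => ?_⟩
    rw [Walk.support_reverse, List.mem_reverse, Walk.support_copy] at hz
    exact hw z hz

lemma Dset_large (hk1 : 1 ≤ k) (hkn : 2 * k < n) (hn : 8 * (2 * k + 2) ^ 2 ≤ n)
    (S : Set (Vtx n)) (hS : S.ncard ≤ 2 * k + 1) : n < 2 * (Dset k S).ncard := by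
  classical
  set B : Vtx n → Finset (Fin n) := fun x =>
    (Finset.Iic k).image (fun o => sh (idx x) o) ∪
    (Finset.Iic k).image (fun o => sh (idx x) (n - o)) with hB
  have hBcard : ∀ x, (B x).card ≤ 2 * k + 2 := by
    intro x
    have h1 := Finset.card_union_le ((Finset.Iic k).image (fun o => sh (idx x) o))
      ((Finset.Iic k).image (fun o => sh (idx x) (n - o)))
    have h2 := Finset.card_image_le (s := Finset.Iic k) (f := fun o => sh (idx x) o)
    have h3 := Finset.card_image_le (s := Finset.Iic k) (f := fun o => sh (idx x) (n - o))
    have h4 : (Finset.Iic k).card = k + 1 := Nat.card_Iic k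
    simp only [hB]; omega
  have hfin : S.Finite := Set.toFinite S
  have hcompl : (Dset k S)ᶜ ⊆ ↑(hfin.toFinset.biUnion B) := by
    intro i hi
    simp only [Dset, Set.mem_compl_iff, Set.mem_setOf_eq] at hi
    push_neg at hi
    obtain ⟨x, hxS, o, hok, hcase⟩ := hi
    have hok' : o ≤ n := by omega
    rw [Finset.coe_biUnion]
    refine Set.mem_biUnion (by rwa [Finset.mem_coe, hfin.mem_toFinset]) ?_
    rw [hB, Finset.mem_coe, Finset.mem_union]
    by_cases h1 : idx x = sh i o
    · right
      rw [Finset.mem_image]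
      refine ⟨o, Finset.mem_Iic.mpr hok, ?_⟩
      rw [h1, sh_sh]
      have : o + (n - o) = n := by omega
      rw [this, sh_n]
    · left
      have h2 : idx x = sh i (n - o) := hcase h1
      rw [Finset.mem_image]
      refine ⟨o, Finset.mem_Iic.mpr hok, ?_⟩
      rw [h2, sh_sh]
      have : n - o + o = n := by omega
      rw [this, sh_n]
  have hcomplcard : ((Dset k S)ᶜ).ncard ≤ (2 * k + 1) * (2 * k + 2) := by
    have h1 : ((Dset k S)ᶜ).ncard ≤ (hfin.toFinset.biUnion B).card := by
      have := Set.ncard_le_ncard hcompl (Set.toFinite _)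
      rwa [Set.ncard_coe_finset] at this
    have h2 : (hfin.toFinset.biUnion B).card ≤ hfin.toFinset.card * (2 * k + 2) := by
      refine (Finset.card_biUnion_le).trans ?_
      calc ∑ x ∈ hfin.toFinset, (B x).card ≤ ∑ _x ∈ hfin.toFinset, (2 * k + 2) :=
            Finset.sum_le_sum (fun x _ => hBcard x)
        _ = hfin.toFinset.card * (2 * k + 2) := by rw [Finset.sum_const, smul_eq_mul]
    have h3 : hfin.toFinset.card = S.ncard := by
      rw [← Set.ncard_coe_finset, hfin.coe_toFinset]
    have h4 : hfin.toFinset.card * (2 * k + 2) ≤ (2 * k + 1) * (2 * k + 2) :=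
      Nat.mul_le_mul_right _ (by omega)
    omega
  have hcc := Set.ncard_add_ncard_compl (Dset k S)
  rw [Nat.card_eq_fintype_card, Fintype.card_fin] at hcc
  have hM : (2 * k + 1) * (2 * k + 2) ≤ (2 * k + 2) ^ 2 := by nlinarith
  set P := (2 * k + 1) * (2 * k + 2)
  set M := (2 * k + 2) ^ 2
  omega

lemma partA (hk1 : 1 ≤ k) (hkn : 2 * k < n) (hn : 8 * (2 * k + 2) ^ 2 ≤ n) :
    ∃ ℬ : Set (Set (Vtx n)), IsBramble (genPetersen n k) ℬ ∧
      ∀ S : Set (Vtx n), (∀ B ∈ ℬ, (S ∩ B).Nonempty) → 2 * k + 2 ≤ S.ncard := by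
  classical
  refine ⟨{W | ((genPetersen n k).induce W).Connected ∧
    n < 2 * {i : Fin n | Sum.inl i ∈ W}.ncard}, ⟨?_, ?_⟩, ?_⟩
  · rintro B ⟨hconn, _⟩
    exact ⟨Set.nonempty_coe_sort.mp hconn.nonempty, hconn⟩
  · rintro B₁ ⟨_, h1⟩ B₂ ⟨_, h2⟩
    left
    have hne : ({i : Fin n | Sum.inl i ∈ B₁} ∩ {i : Fin n | Sum.inl i ∈ B₂}).Nonempty := by
      by_contra hcon
      rw [Set.not_nonempty_iff_eq_empty] at hcon
      have hd : Disjoint {i : Fin n | Sum.inl i ∈ B₁} {i : Fin n | Sum.inl i ∈ B₂} :=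
        Set.disjoint_iff_inter_eq_empty.mpr hcon
      have hu := Set.ncard_union_eq hd (Set.toFinite _) (Set.toFinite _)
      have hle := Set.ncard_le_ncard
        (Set.subset_univ ({i : Fin n | Sum.inl i ∈ B₁} ∪ {i : Fin n | Sum.inl i ∈ B₂}))
        (Set.toFinite _)
      rw [Set.ncard_univ, Nat.card_eq_fintype_card, Fintype.card_fin] at hle
      omega
    obtain ⟨i, hi1, hi2⟩ := hne
    exact ⟨Sum.inl i, hi1, hi2⟩
  · intro S hS
    by_contra hlt
    push_neg at hlt
    have hS' : S.ncard ≤ 2 * k + 1 := by omega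
    have hD := Dset_large hk1 hkn hn S hS'
    have hDne : (Dset k S).Nonempty := Set.nonempty_of_ncard_ne_zero (by omega)
    obtain ⟨i₀, hi₀⟩ := hDne
    have hi₀S : Sum.inl i₀ ∉ S := by
      have h0 := (margin_right hi₀ 0 (by omega)).1
      rwa [sh_zero] at h0
    have hWmem : {y : Vtx n | ∃ w : (genPetersen n k).Walk (Sum.inl i₀) y,
          ∀ z ∈ w.support, z ∉ S} ∈
        {W : Set (Vtx n) | ((genPetersen n k).induce W).Connected ∧
          n < 2 * {i : Fin n | Sum.inl i ∈ W}.ncard} := by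
      constructor
      · refine connOn_induce_connected ?_ (reachset_connOn _ S _)
        refine ⟨Sum.inl i₀, Walk.nil, fun z hz => ?_⟩
        simp only [Walk.support_nil, List.mem_singleton] at hz; subst hz
        exact hi₀S
      · have hsub : Dset k S ⊆ {i : Fin n | Sum.inl i ∈ {y : Vtx n |
            ∃ w : (genPetersen n k).Walk (Sum.inl i₀) y, ∀ z ∈ w.support, z ∉ S}} := by
          intro j hj
          exact connect hk1 hkn S hS' hi₀ hj
        have := Set.ncard_le_ncard hsub (Set.toFinite _)
        omega
    obtain ⟨x, hxS, hxW⟩ := hS _ hWmem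
    obtain ⟨w, hw⟩ := hxW
    exact hw x w.end_mem_support hxS

end BrAux
end PartA3
/-- For positive integers `n, k` with `k < n/2` and `n ≥ 8·(2k+2)²`, the generalized
Petersen graph `G_{n,k}` contains a bramble of order at least `2k+2` (every hitting set
has at least `2k+2` vertices); consequently `tw(G_{n,k}) ≥ 2k+1`. -/
theorem genPetersen_bramble_and_treewidth_lower (n k : ℕ) (hk : 1 ≤ k) (hkn : 2 * k < n)
    (hn : 8 * (2 * k + 2) ^ 2 ≤ n) :
    (∃ ℬ : Set (Set (Fin n ⊕ Fin n)), IsBramble (genPetersen n k) ℬ ∧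
      ∀ S : Set (Fin n ⊕ Fin n), (∀ B ∈ ℬ, (S ∩ B).Nonempty) → 2 * k + 2 ≤ S.ncard) ∧
    2 * k + 1 ≤ treewidth (genPetersen n k) := by
  obtain ⟨ℬ, hb, hhit⟩ := BrAux.partA hk hkn hn
  refine ⟨⟨ℬ, hb, hhit⟩, ?_⟩
  have h := BrAux.treewidth_lower (genPetersen n k) (2 * k + 2) hb hhit
  have h2 : 2 * k + 2 - 1 = 2 * k + 1 := by omega
  rwa [h2] at h
end

section
/- Let n and k be positive integers with k < n/2 and n ≥ 8·(2k+2)². Then the generalized Petersen graph G_{n,k} has pathwidth at most 2k+2: pw(G_{n,k}) ≤ 2k+2. -/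

def gpBagP (n k t : ℕ) : Fin n ⊕ Fin n → Prop :=
  Sum.elim
    (fun j => (j : ℕ) = 0 ∨ (j : ℕ) = t / 2 ∨ (t % 2 = 1 ∧ (j : ℕ) = t / 2 + 1))
    (fun j => (j : ℕ) < k ∨ (t / 2 ≤ (j : ℕ) ∧ (j : ℕ) ≤ t / 2 + k ∧
      (t % 2 = 0 ∨ t / 2 < (j : ℕ))))

instance (n k t : ℕ) : DecidablePred (gpBagP n k t) := fun x => by
  rcases x with j | j
  · exact inferInstanceAs (Decidable ((j : ℕ) = 0 ∨ (j : ℕ) = t / 2 ∨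
      (t % 2 = 1 ∧ (j : ℕ) = t / 2 + 1)))
  · exact inferInstanceAs (Decidable ((j : ℕ) < k ∨ (t / 2 ≤ (j : ℕ) ∧ (j : ℕ) ≤ t / 2 + k ∧
      (t % 2 = 0 ∨ t / 2 < (j : ℕ)))))

def gpBag (n k t : ℕ) : Finset (Fin n ⊕ Fin n) := Finset.univ.filter (gpBagP n k t)

lemma mem_gpBag_inl {n k t : ℕ} (j : Fin n) :
    Sum.inl j ∈ gpBag n k t ↔
      ((j : ℕ) = 0 ∨ (j : ℕ) = t / 2 ∨ (t % 2 = 1 ∧ (j : ℕ) = t / 2 + 1)) := by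
  unfold gpBag; rw [Finset.mem_filter]; simp [gpBagP]

lemma mem_gpBag_inr {n k t : ℕ} (j : Fin n) :
    Sum.inr j ∈ gpBag n k t ↔
      ((j : ℕ) < k ∨ (t / 2 ≤ (j : ℕ) ∧ (j : ℕ) ≤ t / 2 + k ∧
        (t % 2 = 0 ∨ t / 2 < (j : ℕ)))) := by
  unfold gpBag; rw [Finset.mem_filter]; simp [gpBagP]

def gpFlat (n : ℕ) : Fin n ⊕ Fin n → ℕ := Sum.elim (fun j => (j : ℕ)) (fun j => n + (j : ℕ))

lemma gpFlat_inj (n : ℕ) : Function.Injective (gpFlat n) := by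
  rintro (a | a) (b | b) h <;> simp [gpFlat] at h
  · exact congrArg Sum.inl (Fin.ext h)
  · exact absurd h (by have := a.isLt; omega)
  · exact absurd h (by have := b.isLt; omega)
  · exact congrArg Sum.inr (Fin.ext (by omega))

lemma gpBag_card_le (n k t : ℕ) : (gpBag n k t).card ≤ 2 * k + 3 := by
  rcases Nat.mod_two_eq_zero_or_one t with ht | ht
  · have hsub : ∀ x ∈ gpBag n k t, gpFlat n x ∈
        ({0, t / 2} : Finset ℕ) ∪
          (Finset.range k ∪ Finset.Icc (t / 2) (t / 2 + k)).image (fun a => n + a) := by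
      rintro (j | j) hx
      · rw [mem_gpBag_inl] at hx
        apply Finset.mem_union_left
        simp only [gpFlat, Sum.elim_inl, Finset.mem_insert, Finset.mem_singleton]
        omega
      · rw [mem_gpBag_inr] at hx
        apply Finset.mem_union_right
        refine Finset.mem_image.2 ⟨(j : ℕ), ?_, rfl⟩
        simp only [Finset.mem_union, Finset.mem_range, Finset.mem_Icc]
        omega
    have h1 := Finset.card_le_card_of_injOn _ hsub ((gpFlat_inj n).injOn)
    have h2 : (({0, t / 2} : Finset ℕ)).card ≤ 2 :=
      le_trans (Finset.card_insert_le _ _) (by simp)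
    have h3 : ((Finset.range k ∪ Finset.Icc (t / 2) (t / 2 + k)).image (fun a => n + a)).card
        ≤ k + (k + 1) := by
      refine le_trans (Finset.card_image_le) (le_trans (Finset.card_union_le _ _) ?_)
      simp only [Finset.card_range, Nat.card_Icc]
      omega
    have h4 := Finset.card_union_le ({0, t / 2} : Finset ℕ)
      ((Finset.range k ∪ Finset.Icc (t / 2) (t / 2 + k)).image (fun a => n + a))
    omega
  · have hsub : ∀ x ∈ gpBag n k t, gpFlat n x ∈
        ({0, t / 2, t / 2 + 1} : Finset ℕ) ∪
          (Finset.range k ∪ Finset.Icc (t / 2 + 1) (t / 2 + k)).image (fun a => n + a) := by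
      rintro (j | j) hx
      · rw [mem_gpBag_inl] at hx
        apply Finset.mem_union_left
        simp only [gpFlat, Sum.elim_inl, Finset.mem_insert, Finset.mem_singleton]
        omega
      · rw [mem_gpBag_inr] at hx
        apply Finset.mem_union_right
        refine Finset.mem_image.2 ⟨(j : ℕ), ?_, rfl⟩
        simp only [Finset.mem_union, Finset.mem_range, Finset.mem_Icc]
        omega
    have h1 := Finset.card_le_card_of_injOn _ hsub ((gpFlat_inj n).injOn)
    have h2 : (({0, t / 2, t / 2 + 1} : Finset ℕ)).card ≤ 3 := by
      have h := Finset.card_insert_le (t / 2) ({t / 2 + 1} : Finset ℕ)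
      refine le_trans (Finset.card_insert_le _ _) ?_
      simp only [Finset.card_singleton] at h
      omega
    have h3 : ((Finset.range k ∪ Finset.Icc (t / 2 + 1) (t / 2 + k)).image (fun a => n + a)).card
        ≤ k + k := by
      refine le_trans (Finset.card_image_le) (le_trans (Finset.card_union_le _ _) ?_)
      simp only [Finset.card_range, Nat.card_Icc]
      omega
    have h4 := Finset.card_union_le ({0, t / 2, t / 2 + 1} : Finset ℕ)
      ((Finset.range k ∪ Finset.Icc (t / 2 + 1) (t / 2 + k)).image (fun a => n + a))
    omega


lemma gp_spoke (n k : ℕ) (hn : 0 < n) (i : Fin n) :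
    ∃ t : Fin (2 * n), Sum.inl i ∈ gpBag n k (t : ℕ) ∧ Sum.inr i ∈ gpBag n k (t : ℕ) := by
  have hi := i.isLt
  refine ⟨⟨2 * (i : ℕ), by omega⟩, ?_, ?_⟩
  · rw [mem_gpBag_inl]; simp only [Fin.val_mk]; omega
  · rw [mem_gpBag_inr]; simp only [Fin.val_mk]; omega

lemma gp_outer_edge (n k : ℕ) (hn : 0 < n) (i j : Fin n) (h : (j : ℕ) = ((i : ℕ) + 1) % n) :
    ∃ t : Fin (2 * n), Sum.inl i ∈ gpBag n k (t : ℕ) ∧ Sum.inl j ∈ gpBag n k (t : ℕ) := by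
  have hi := i.isLt
  have hj := j.isLt
  rcases lt_or_ge ((i : ℕ) + 1) n with hc | hc
  · rw [Nat.mod_eq_of_lt hc] at h
    refine ⟨⟨2 * (i : ℕ) + 1, by omega⟩, ?_, ?_⟩ <;>
      · rw [mem_gpBag_inl]; simp only [Fin.val_mk]; omega
  · have hin : (i : ℕ) + 1 = n := by omega
    rw [hin, Nat.mod_self] at h
    refine ⟨⟨2 * (i : ℕ), by omega⟩, ?_, ?_⟩ <;>
      · rw [mem_gpBag_inl]; simp only [Fin.val_mk]; omega

lemma gp_inner_edge (n k : ℕ) (hkn : 2 * k < n) (i j : Fin n)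
    (h : (j : ℕ) = ((i : ℕ) + k) % n) :
    ∃ t : Fin (2 * n), Sum.inr i ∈ gpBag n k (t : ℕ) ∧ Sum.inr j ∈ gpBag n k (t : ℕ) := by
  have hi := i.isLt
  have hj := j.isLt
  have hmod : (j : ℕ) = (i : ℕ) + k ∨ ((j : ℕ) + n = (i : ℕ) + k ∧ n ≤ (i : ℕ) + k) := by
    rcases lt_or_ge ((i : ℕ) + k) n with hc | hc
    · left; rw [Nat.mod_eq_of_lt hc] at h; exact h
    · right
      have h2 : ((i : ℕ) + k) % n = (i : ℕ) + k - n := by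
        rw [Nat.mod_eq_sub_mod hc, Nat.mod_eq_of_lt (by omega)]
      omega
  refine ⟨⟨2 * (i : ℕ), by omega⟩, ?_, ?_⟩ <;>
    · rw [mem_gpBag_inr]; simp only [Fin.val_mk]; omega

/-- For positive integers `n, k` with `k < n/2` and `n ≥ 8·(2k+2)²`, the generalized
Petersen graph `G_{n,k}` has pathwidth at most `2k+2`. -/
theorem pathwidth_genPetersen_le (n k : ℕ) (hk : 1 ≤ k) (hkn : 2 * k < n)
    (hn : 8 * (2 * k + 2) ^ 2 ≤ n) :
    pathwidth (genPetersen n k) ≤ 2 * k + 2 := by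
  have hn0 : 0 < n := by omega
  let D : PathDecomp (genPetersen n k) (2 * n) :=
    { bag := fun t => gpBag n k (t : ℕ)
      cover := by
        rintro (j | j)
        · exact ⟨(gp_spoke n k hn0 j).choose, (gp_spoke n k hn0 j).choose_spec.1⟩
        · exact ⟨(gp_spoke n k hn0 j).choose, (gp_spoke n k hn0 j).choose_spec.2⟩
      edgeCover := by
        rintro (i | i) (j | j) huv <;>
          simp only [genPetersen, SimpleGraph.fromRel_adj, ne_eq, Sum.inl.injEq,
            Sum.inr.injEq, reduceCtorEq, not_false_eq_true, true_and, or_false,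
            false_or] at huv
        · rcases huv with ⟨-, h | h⟩
          · exact gp_outer_edge n k hn0 i j h
          · obtain ⟨t, h1, h2⟩ := gp_outer_edge n k hn0 j i h
            exact ⟨t, h2, h1⟩
        · subst huv
          exact gp_spoke n k hn0 _
        · subst huv
          obtain ⟨t, h1, h2⟩ := gp_spoke n k hn0 _
          exact ⟨t, h2, h1⟩
        · rcases huv with ⟨-, h | h⟩
          · exact gp_inner_edge n k hkn i j h
          · obtain ⟨t, h1, h2⟩ := gp_inner_edge n k hkn j i h
            exact ⟨t, h2, h1⟩
      interval := by
        rintro (j | j) t1 t2 t3 h12 h23 h1 h3 <;>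
          [rw [mem_gpBag_inl] at h1 h3 ⊢; rw [mem_gpBag_inr] at h1 h3 ⊢] <;>
          · have h12' : (t1 : ℕ) ≤ (t2 : ℕ) := h12
            have h23' : (t2 : ℕ) ≤ (t3 : ℕ) := h23
            omega }
  have hmem : ((Finset.univ.sup fun i => (D.bag i).card) - 1) ∈
      { w : ℕ | ∃ (m : ℕ) (D : PathDecomp (genPetersen n k) m),
        (Finset.univ.sup fun i => (D.bag i).card) - 1 = w } := ⟨2 * n, D, rfl⟩
  have hsup : (Finset.univ.sup fun i => (D.bag i).card) ≤ 2 * k + 3 :=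
    Finset.sup_le fun t _ => gpBag_card_le n k (t : ℕ)
  exact le_trans (Nat.sInf_le hmem) (by omega)
end
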